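/- arXiv:1712.01342 — 3 statements merged into one kernel-verified Lean document; each statement's English description precedes it below -/
import Mathlib

section
/- Let 0<γ≤1, let y ∈ ℝⁿ and r>0, and let f be a locally integrable function on ℝⁿ vanishing on the ball B(y,2r). Then there is a dimensional constant C>0 (independent of f, y, r) such that for every x ∈ B(y,r), S_γ(f)(x) ≤ C Σ_{l=1}^∞ (1/|B(y,2^{l+1}r)|) ∫_{B(y,2^{l+1}r)∖B(y,2^l r)} |f(z)| dz. -/
open MeasureTheory Metric Set
open scoped ENNReal NNReal Real

noncomputable section

/-- Euclidean space `ℝⁿ`. -/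
abbrev En (n : ℕ) := EuclideanSpace ℝ (Fin n)

/-- The weighted measure `w(s) = ∫_s w` of a set. -/
def wMeas {n : ℕ} (w : En n → ℝ) (s : Set (En n)) : ℝ≥0∞ :=
  ∫⁻ x in s, ENNReal.ofReal (w x)

/-- A weight: a positive locally integrable function. -/
def IsWeight {n : ℕ} (w : En n → ℝ) : Prop :=
  LocallyIntegrable w volume ∧ ∀ x, 0 < w x

/-- Average of a weight over a ball (lower-integral version). -/
def ballAvg {n : ℕ} (w : En n → ℝ) (y : En n) (r : ℝ) : ℝ≥0∞ :=
  wMeas w (ball y r) / volume (ball y r)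

/-- The Muckenhoupt class `A_p`, `1 < p < ∞`. -/
def IsAp {n : ℕ} (w : En n → ℝ) (p : ℝ) : Prop :=
  IsWeight w ∧ ∃ C : ℝ, 0 < C ∧ ∀ (y : En n) (r : ℝ), 0 < r →
    (ballAvg w y r) ^ (1 / p) *
      (ballAvg (fun x => w x ^ (-(1 / (p - 1)))) y r) ^ (1 - 1 / p) ≤ ENNReal.ofReal C

/-- The Muckenhoupt class `A₁`. -/
def IsA1 {n : ℕ} (w : En n → ℝ) : Prop :=
  IsWeight w ∧ ∃ C : ℝ, 0 < C ∧ ∀ (y : En n) (r : ℝ), 0 < r →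
    ballAvg w y r ≤ ENNReal.ofReal C *
      ENNReal.ofReal (essInf w (volume.restrict (ball y r)))

/-- `A_∞ = ⋃_{1 ≤ p < ∞} A_p`. -/
def IsAinfty {n : ℕ} (w : En n → ℝ) : Prop :=
  IsA1 w ∨ ∃ p : ℝ, 1 < p ∧ IsAp w p

/-- The doubling class `Δ₂`: `μ(2B) ≤ C μ(B)` for all balls. -/
def IsDoubling {n : ℕ} (μ : En n → ℝ) : Prop :=
  IsWeight μ ∧ ∃ C : ℝ, 0 < C ∧ ∀ (y : En n) (r : ℝ), 0 < r →
    wMeas μ (ball y (2 * r)) ≤ ENNReal.ofReal C * wMeas μ (ball y r)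

/-- The family `C_γ` of kernels: supported in the unit ball, mean zero,
`γ`-Hölder with constant 1. -/
def Cfam (n : ℕ) (γ : ℝ) : Set (En n → ℝ) :=
  {φ | Function.support φ ⊆ closedBall 0 1 ∧ (∫ x, φ x) = 0 ∧
    ∀ x x' : En n, |φ x - φ x'| ≤ ‖x - x'‖ ^ γ}

/-- `L¹` dilation `φ_t(y) = t^{-n} φ(y/t)`. -/
def dil {n : ℕ} (φ : En n → ℝ) (t : ℝ) (y : En n) : ℝ :=
  t ^ (-(n : ℝ)) * φ (t⁻¹ • y)

/-- `A_γ(f)(y,t) = sup_{φ ∈ C_γ} |φ_t * f(y)|`. -/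
def Agamma {n : ℕ} (γ : ℝ) (f : En n → ℝ) (y : En n) (t : ℝ) : ℝ :=
  ⨆ φ ∈ Cfam n γ, |∫ z, dil φ t (y - z) * f z|

/-- Square integral of `F(y,t)` over the cone `Γ(x)`, against `dy dt / t^{n+1}`. -/
def coneInt {n : ℕ} (F : En n → ℝ → ℝ) (x : En n) : ℝ≥0∞ :=
  (∫⁻ p : En n × ℝ,
    Set.indicator {q : En n × ℝ | dist x q.1 < q.2}
      (fun q => ENNReal.ofReal (F q.1 q.2) ^ 2 / ENNReal.ofReal (q.2 ^ ((n : ℝ) + 1))) p)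
    ^ (1 / 2 : ℝ)

/-- The intrinsic square function `S_γ(f)`. -/
def Sgamma {n : ℕ} (γ : ℝ) (f : En n → ℝ) (x : En n) : ℝ≥0∞ :=
  coneInt (Agamma γ f) x

/-- `(Σ_j |S_γ(f_j)(x)|²)^{1/2}`. -/
def Sl2 {n : ℕ} (γ : ℝ) (f : ℕ → En n → ℝ) (x : En n) : ℝ≥0∞ :=
  (∑' j, Sgamma γ (f j) x ^ 2) ^ (1 / 2 : ℝ)

/-- `‖f⃗(x)‖_{ℓ²} = (Σ_j |f_j(x)|²)^{1/2}`. -/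
def l2 {n : ℕ} (f : ℕ → En n → ℝ) (x : En n) : ℝ≥0∞ :=
  (∑' j, ENNReal.ofReal |f j x| ^ 2) ^ (1 / 2 : ℝ)

/-- Weighted `L^p` norm of an `ℝ≥0∞`-valued function (`p` finite). -/
def wLp {n : ℕ} (w : En n → ℝ) (p : ℝ) (g : En n → ℝ≥0∞) : ℝ≥0∞ :=
  (∫⁻ x, g x ^ p * ENNReal.ofReal (w x)) ^ (1 / p)

/-- Weighted `L^p` norm restricted to a set. -/
def wLpOn {n : ℕ} (w : En n → ℝ) (p : ℝ) (s : Set (En n)) (g : En n → ℝ≥0∞) : ℝ≥0∞ :=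
  (∫⁻ x in s, g x ^ p * ENNReal.ofReal (w x)) ^ (1 / p)

/-- Weighted weak `L^p` quasi-norm. -/
def wWeakLp {n : ℕ} (w : En n → ℝ) (p : ℝ) (g : En n → ℝ≥0∞) : ℝ≥0∞ :=
  ⨆ (lam : ℝ) (_ : 0 < lam),
    ENNReal.ofReal lam * wMeas w {x | ENNReal.ofReal lam < g x} ^ (1 / p)

/-- Weighted weak `L^p` quasi-norm restricted to a set. -/
def wWeakLpOn {n : ℕ} (w : En n → ℝ) (p : ℝ) (s : Set (En n)) (g : En n → ℝ≥0∞) : ℝ≥0∞ :=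
  ⨆ (lam : ℝ) (_ : 0 < lam),
    ENNReal.ofReal lam * wMeas w {x | x ∈ s ∧ ENNReal.ofReal lam < g x} ^ (1 / p)

/-- `L^q` norm (with exponent `q ∈ (0,∞]`, usual modification at `∞`) of an
`ℝ≥0∞`-valued function with respect to a measure. -/
def lqNorm {n : ℕ} (ν : Measure (En n)) (q : ℝ≥0∞) (F : En n → ℝ≥0∞) : ℝ≥0∞ :=
  if q = ∞ then essSup F ν else (∫⁻ y, F y ^ q.toReal ∂ν) ^ (1 / q.toReal)

/-- The measure `μ(y) dy`. -/
def muDens {n : ℕ} (μ : En n → ℝ) : Measure (En n) :=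
  volume.withDensity fun y => ENNReal.ofReal (μ y)

/-- The weighted amalgam norm `‖·‖_{(L^p,L^q)^α(w;μ)}`. -/
def amalgamNorm {n : ℕ} (w μ : En n → ℝ) (p α : ℝ) (q : ℝ≥0∞) (g : En n → ℝ≥0∞) : ℝ≥0∞ :=
  ⨆ (r : ℝ) (_ : 0 < r),
    lqNorm (muDens μ) q fun y =>
      wMeas w (ball y r) ^ (1 / α - 1 / p - (q⁻¹).toReal) * wLpOn w p (ball y r) g

/-- The weighted weak amalgam norm `‖·‖_{(WL^p,L^q)^α(w;μ)}`. -/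
def amalgamWeakNorm {n : ℕ} (w μ : En n → ℝ) (p α : ℝ) (q : ℝ≥0∞) (g : En n → ℝ≥0∞) : ℝ≥0∞ :=
  ⨆ (r : ℝ) (_ : 0 < r),
    lqNorm (muDens μ) q fun y =>
      wMeas w (ball y r) ^ (1 / α - 1 / p - (q⁻¹).toReal) * wWeakLpOn w p (ball y r) g

/-- `sup_{φ ∈ C_γ} |∫ [b(x) - b(z)] φ_t(y-z) f(z) dz|`. -/
def AgammaComm {n : ℕ} (γ : ℝ) (b f : En n → ℝ) (x y : En n) (t : ℝ) : ℝ :=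
  ⨆ φ ∈ Cfam n γ, |∫ z, (b x - b z) * dil φ t (y - z) * f z|

/-- The commutator `[b, S_γ](f)`. -/
def commS {n : ℕ} (γ : ℝ) (b f : En n → ℝ) (x : En n) : ℝ≥0∞ :=
  coneInt (AgammaComm γ b f x) x

/-- `(Σ_j |[b,S_γ](f_j)(x)|²)^{1/2}`. -/
def commSl2 {n : ℕ} (γ : ℝ) (b : En n → ℝ) (f : ℕ → En n → ℝ) (x : En n) : ℝ≥0∞ :=
  (∑' j, commS γ b (f j) x ^ 2) ^ (1 / 2 : ℝ)

/-- Average of `b` over the ball `B(y,r)`. -/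
def ballAvgF {n : ℕ} (b : En n → ℝ) (y : En n) (r : ℝ) : ℝ :=
  ⨍ x in ball y r, b x

/-- `b ∈ BMO(ℝⁿ)` with `‖b‖_* ≤ M` (over balls). -/
def IsBMOwith {n : ℕ} (b : En n → ℝ) (M : ℝ) : Prop :=
  LocallyIntegrable b volume ∧
  ∀ (y : En n) (r : ℝ), 0 < r →
    (⨍ x in ball y r, |b x - ballAvgF b y r|) ≤ M

/-- The Young function `Φ(t) = t(1 + log⁺ t)` on `ℝ≥0∞`. -/
def PhiE (t : ℝ≥0∞) : ℝ≥0∞ :=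
  t * (1 + ENNReal.ofReal (max (Real.log t.toReal) 0))

/-- Weighted Luxemburg norm `‖g‖_{L log L(w), s}`. -/
def luxLlogL {n : ℕ} (w : En n → ℝ) (s : Set (En n)) (g : En n → ℝ≥0∞) : ℝ≥0∞ :=
  sInf {c : ℝ≥0∞ | 0 < c ∧ c ≠ ∞ ∧
    (∫⁻ x in s, PhiE (g x / c) * ENNReal.ofReal (w x)) ≤ wMeas w s}

/-- The weighted amalgam norm of `L log L` type, `‖·‖_{(L log L, L^q)^α(w;μ)}`. -/
def amalgamLlogL {n : ℕ} (w μ : En n → ℝ) (α : ℝ) (q : ℝ≥0∞) (g : En n → ℝ≥0∞) : ℝ≥0∞ :=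
  ⨆ (r : ℝ) (_ : 0 < r),
    lqNorm (muDens μ) q fun y =>
      wMeas w (ball y r) ^ (1 / α - (q⁻¹).toReal) * luxLlogL w (ball y r) g

/-- The centered Hardy–Littlewood maximal function. -/
def HLmax {n : ℕ} (w : En n → ℝ) (x : En n) : ℝ≥0∞ :=
  ⨆ (r : ℝ) (_ : 0 < r), ballAvg (fun z => |w z|) x r

/-- Axis-parallel cube with center `c` and side length `L`. -/
def cube {n : ℕ} (c : En n) (L : ℝ) : Set (En n) := {x | ∀ i, |x i - c i| ≤ L / 2}

/-- Average of `b` over the cube of center `c` and side `L`. -/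
def cubeAvgF {n : ℕ} (b : En n → ℝ) (c : En n) (L : ℝ) : ℝ :=
  ⨍ x in cube c L, b x

/-- `b ∈ BMO(ℝⁿ)` with `‖b‖_* ≤ M` (over cubes). -/
def IsBMOcubeWith {n : ℕ} (b : En n → ℝ) (M : ℝ) : Prop :=
  LocallyIntegrable b volume ∧
  ∀ (c : En n) (L : ℝ), 0 < L →
    (⨍ x in cube c L, |b x - cubeAvgF b c L|) ≤ M

/-- Weighted Luxemburg norm `‖g‖_{exp L(w), s}` for the Young function `e^t - 1`. -/
def luxExpL {n : ℕ} (w : En n → ℝ) (s : Set (En n)) (g : En n → ℝ) : ℝ≥0∞ :=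
  sInf ((fun σ : ℝ => ENNReal.ofReal σ) ''
    {σ : ℝ | 0 < σ ∧
      (∫⁻ x in s, ENNReal.ofReal (Real.exp (|g x| / σ) - 1) * ENNReal.ofReal (w x))
        ≤ wMeas w s})

/-- `sup_{φ ∈ C_γ} |φ_t * g(y)|` for a complex-valued `g`. -/
def AgammaC {n : ℕ} (γ : ℝ) (g : En n → ℂ) (y : En n) (t : ℝ) : ℝ :=
  ⨆ φ ∈ Cfam n γ, ‖∫ z, (dil φ t (y - z) : ℂ) * g z‖

/-- The intrinsic square function of a complex-valued function. -/
def SgammaC {n : ℕ} (γ : ℝ) (g : En n → ℂ) (x : En n) : ℝ≥0∞ :=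
  coneInt (AgammaC γ g) x



/-! ### Auxiliary lemmas for Statement 11 -/

private lemma aux_iSup_rpow (f : ℕ → ℝ≥0∞) {p : ℝ} (hp : 0 < p) :
    (⨆ i, f i) ^ p = ⨆ i, f i ^ p := by
  refine le_antisymm ?_ (iSup_le fun i => ENNReal.rpow_le_rpow (le_iSup f i) hp.le)
  have h1 : ⨆ i, f i ≤ (⨆ i, f i ^ p) ^ p⁻¹ := by
    refine iSup_le fun i => ?_
    rw [← ENNReal.rpow_rpow_inv hp.ne' (f i)]
    exact ENNReal.rpow_le_rpow (le_iSup (fun i => f i ^ p) i) (by positivity)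
  calc (⨆ i, f i) ^ p ≤ ((⨆ i, f i ^ p) ^ p⁻¹) ^ p := ENNReal.rpow_le_rpow h1 hp.le
    _ = ⨆ i, f i ^ p := ENNReal.rpow_inv_rpow hp.ne' _

private lemma aux_mink {α : Type*} [MeasurableSpace α] (μ : Measure α) (h : ℕ → α → ℝ≥0∞)
    (hm : ∀ l, Measurable (h l)) :
    (∫⁻ a, (∑' l, h l a) ^ (2:ℝ) ∂μ) ^ ((1:ℝ)/2) ≤
      ∑' l, (∫⁻ a, h l a ^ (2:ℝ) ∂μ) ^ ((1:ℝ)/2) := by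
  have hSm : ∀ L : ℕ, Measurable fun a => (∑ l ∈ Finset.range L, h l a) ^ (2:ℝ) := by
    intro L
    exact (by fun_prop : Measurable fun z : ℝ≥0∞ => z ^ (2:ℝ)).comp
      (Finset.measurable_sum _ fun l _ => hm l)
  have hfin : ∀ L : ℕ, (∫⁻ a, (∑ l ∈ Finset.range L, h l a) ^ (2:ℝ) ∂μ) ^ ((1:ℝ)/2) ≤
      ∑ l ∈ Finset.range L, (∫⁻ a, h l a ^ (2:ℝ) ∂μ) ^ ((1:ℝ)/2) := by
    intro L
    induction L with
    | zero => simp [ENNReal.zero_rpow_of_pos, ENNReal.zero_rpow_of_pos (by norm_num : (0:ℝ) < 1/2)]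
    | succ L ih =>
      have hstep : (∫⁻ a, (∑ l ∈ Finset.range (L+1), h l a) ^ (2:ℝ) ∂μ) ^ ((1:ℝ)/2) ≤
          (∫⁻ a, (∑ l ∈ Finset.range L, h l a) ^ (2:ℝ) ∂μ) ^ ((1:ℝ)/2) +
          (∫⁻ a, h L a ^ (2:ℝ) ∂μ) ^ ((1:ℝ)/2) := by
        simp_rw [Finset.sum_range_succ]
        exact ENNReal.lintegral_Lp_add_le
          (Finset.measurable_sum _ fun l _ => hm l).aemeasurable (hm L).aemeasurable one_le_two
      refine hstep.trans ?_
      rw [Finset.sum_range_succ]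
      exact add_le_add_left ih _
  have hmono : Monotone fun L : ℕ => fun a => (∑ l ∈ Finset.range L, h l a) ^ (2:ℝ) := by
    intro L1 L2 hL a
    exact ENNReal.rpow_le_rpow
      (Finset.sum_le_sum_of_subset (Finset.range_subset_range.2 hL)) (by norm_num)
  calc (∫⁻ a, (∑' l, h l a) ^ (2:ℝ) ∂μ) ^ ((1:ℝ)/2)
      = (⨆ L : ℕ, ∫⁻ a, (∑ l ∈ Finset.range L, h l a) ^ (2:ℝ) ∂μ) ^ ((1:ℝ)/2) := by
        rw [← lintegral_iSup hSm hmono]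
        congr 1
        refine lintegral_congr fun a => ?_
        rw [ENNReal.tsum_eq_iSup_nat, aux_iSup_rpow _ two_pos]
    _ = ⨆ L : ℕ, (∫⁻ a, (∑ l ∈ Finset.range L, h l a) ^ (2:ℝ) ∂μ) ^ ((1:ℝ)/2) :=
        aux_iSup_rpow _ (by norm_num)
    _ ≤ ∑' l, (∫⁻ a, h l a ^ (2:ℝ) ∂μ) ^ ((1:ℝ)/2) :=
        iSup_le fun L => (hfin L).trans (ENNReal.sum_le_tsum _)

private lemma aux_tint {n : ℕ} (hn : 0 < n) {a : ℝ} (ha : 0 < a) :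
    (∫⁻ t in Set.Ioi a, ENNReal.ofReal (t ^ (-(2*(n:ℝ)+1)))) =
      ENNReal.ofReal (a ^ (-(2*(n:ℝ))) / (2*(n:ℝ))) := by
  have hn1 : (1:ℝ) ≤ n := Nat.one_le_cast.2 hn
  have hc : (-(2*(n:ℝ)+1)) < -1 := by linarith
  rw [← ofReal_integral_eq_lintegral_ofReal (integrableOn_Ioi_rpow_of_lt hc ha)
      ((ae_restrict_mem measurableSet_Ioi).mono fun t ht =>
        Real.rpow_nonneg (le_of_lt (ha.trans ht)) _)]
  rw [integral_Ioi_rpow_of_lt hc ha]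
  congr 1
  rw [show -(2*(n:ℝ)+1) + 1 = -(2*(n:ℝ)) by ring]
  rw [neg_div_neg_eq]

private lemma aux_coneInt_zero {n : ℕ} (F : En n → ℝ → ℝ) (x : En n)
    (hF : ∀ y t, F y t ≤ 0) : coneInt F x = 0 := by
  unfold coneInt
  have h0 : ∀ p : En n × ℝ, Set.indicator {q : En n × ℝ | dist x q.1 < q.2}
      (fun q => ENNReal.ofReal (F q.1 q.2) ^ 2 / ENNReal.ofReal (q.2 ^ ((n:ℝ)+1))) p = 0 := by
    intro p
    rw [Set.indicator_apply]
    split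
    · rw [ENNReal.ofReal_eq_zero.2 (hF _ _)]
      simp
    · rfl
  rw [lintegral_congr h0, lintegral_zero, ENNReal.zero_rpow_of_pos (by norm_num)]

/-- pointwise bound for `S_γ(f)` on `B(y,r)` when `f` vanishes on
`B(y,2r)`. -/
theorem intrinsic_square_far_part_pointwise (n : ℕ) (γ : ℝ)
    (hγ0 : 0 < γ) (hγ1 : γ ≤ 1) :
    ∃ C : ℝ, 0 < C ∧ ∀ f : En n → ℝ, LocallyIntegrable f volume →
      ∀ (y : En n) (r : ℝ), 0 < r → (∀ z ∈ ball y (2 * r), f z = 0) →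
      ∀ x ∈ ball y r,
        Sgamma γ f x ≤ ENNReal.ofReal C *
          ∑' l : ℕ, (volume (ball y ((2 : ℝ) ^ (l + 2) * r)))⁻¹ *
            ∫⁻ z in ball y ((2 : ℝ) ^ (l + 2) * r) \ ball y ((2 : ℝ) ^ (l + 1) * r),
              ENNReal.ofReal |f z| := by
  rcases Nat.eq_zero_or_pos n with hn | hn
  · -- dimension 0 : f vanishes identically and Sγ f = 0
    subst hn
    refine ⟨1, one_pos, fun f hf y r hr hfz x hx => ?_⟩
    have hf0 : ∀ z : En 0, f z = 0 := by
      intro z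
      refine hfz z (mem_ball.2 ?_)
      have : dist z y = 0 := by simp [EuclideanSpace.dist_eq]
      rw [this]; linarith
    have hA : ∀ (y' : En 0) (t : ℝ), Agamma γ f y' t ≤ 0 := by
      intro y' t
      unfold Agamma
      refine Real.iSup_le (fun φ => Real.iSup_le (fun _ => ?_) le_rfl) le_rfl
      simp [hf0]
    unfold Sgamma
    rw [aux_coneInt_zero _ _ hA]
    exact zero_le
  · -- main case : n ≥ 1
    have hn1 : (1:ℝ) ≤ n := Nat.one_le_cast.2 hn
    haveI : Nontrivial (En n) := by
      have h1 : ‖EuclideanSpace.single (⟨0, hn⟩ : Fin n) (1:ℝ)‖ = 1 := by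
        rw [EuclideanSpace.norm_single]; norm_num
      refine ⟨EuclideanSpace.single (⟨0, hn⟩ : Fin n) (1:ℝ), 0, fun hc => ?_⟩
      rw [hc, norm_zero] at h1
      norm_num at h1
    set cn : ℝ≥0∞ := volume (ball (0 : En n) 1) with hcn
    have hcn0 : cn ≠ 0 := (measure_ball_pos volume (0 : En n) one_pos).ne'
    have hcnt : cn ≠ ∞ := measure_ball_lt_top.ne
    set K : ℝ≥0∞ := cn ^ ((3:ℝ)/2) *
      ENNReal.ofReal (3 * 8^n * (2*(n:ℝ)) ^ (-(1:ℝ)/2)) with hK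
    have hKt : K ≠ ∞ :=
      ENNReal.mul_ne_top (ENNReal.rpow_ne_top_of_nonneg (by norm_num) hcnt) ENNReal.ofReal_ne_top
    refine ⟨K.toReal + 1, by positivity, fun f hf y r hr hfz x hx => ?_⟩
    set I : ℕ → ℝ≥0∞ := fun l =>
      ∫⁻ z in ball y ((2:ℝ)^(l+2) * r) \ ball y ((2:ℝ)^(l+1) * r), ENNReal.ofReal |f z| with hI
    set V : ℕ → ℝ≥0∞ := fun l => volume (ball y ((2:ℝ)^(l+2) * r)) with hV
    -- finiteness of the annular integrals
    have hfin : ∀ R : ℝ, (∫⁻ z in ball y R, ENNReal.ofReal |f z|) < ∞ := by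
      intro R
      have h1 : IntegrableOn f (ball y R) volume :=
        (hf.integrableOn_isCompact (isCompact_closedBall y R)).mono_set ball_subset_closedBall
      have h2 := h1.2
      rw [hasFiniteIntegral_def] at h2
      refine lt_of_eq_of_lt ?_ h2
      exact lintegral_congr fun z => (Real.enorm_eq_ofReal_abs _).symm
    have hIfin : ∀ l, I l ≠ ∞ := by
      intro l
      refine (lt_of_le_of_lt (lintegral_mono_set Set.diff_subset) (hfin _)).ne
    -- the building blocks
    set ρ : ℕ → ℝ → ℝ≥0∞ := fun l t =>
      if (2:ℝ)^l * r < 2*t then ENNReal.ofReal (3 * t ^ (-(n:ℝ))) * I l else 0 with hρ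
    set cone : Set (En n × ℝ) := {q | dist x q.1 < q.2} with hcone
    have hconem : MeasurableSet cone := by
      rw [hcone]
      exact (isOpen_lt (continuous_const.dist continuous_fst) continuous_snd).measurableSet
    set h : ℕ → En n × ℝ → ℝ≥0∞ := fun l =>
      cone.indicator (fun q => ρ l q.2 * ENNReal.ofReal (q.2 ^ ((n:ℝ)+1)) ^ (-(1:ℝ)/2)) with hh
    have hmeas : ∀ l, Measurable (h l) := by
      intro l
      simp only [hh]
      refine Measurable.indicator (Measurable.mul ?_ ?_) hconem
      · simp only [hρ]
        have hb : Measurable fun t : ℝ => ENNReal.ofReal (3 * t ^ (-(n:ℝ))) * I l := by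
          fun_prop
        exact (Measurable.ite (measurableSet_lt measurable_const (measurable_id.const_mul 2))
          hb measurable_const).comp measurable_snd
      · fun_prop
    -- the basic convolution estimate
    have hconv : ∀ y' : En n, ∀ t : ℝ, dist x y' < t → ∀ φ ∈ Cfam n γ,
        ENNReal.ofReal |∫ z, dil φ t (y' - z) * f z| ≤ ∑' l, ρ l t := by
      intro y' t hyt φ hφ
      have ht : 0 < t := lt_of_le_of_lt dist_nonneg hyt
      obtain ⟨hφs, -, hφh⟩ := hφ
      have hsupp : ∀ u : En n, 1 < ‖u‖ → φ u = 0 := by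
        intro u hu
        by_contra hne
        exact absurd (mem_closedBall_zero_iff.1 (hφs (Function.mem_support.2 hne)))
          (not_le.2 hu)
      have hφb : ∀ v : En n, |φ v| ≤ 3 := by
        intro v
        by_cases hv : ‖v‖ ≤ 1
        · set e : En n := EuclideanSpace.single (⟨0, hn⟩ : Fin n) (3:ℝ) with he
          have hen : ‖e‖ = 3 := by rw [he, EuclideanSpace.norm_single]; norm_num
          have hve : (2:ℝ) ≤ ‖v + e‖ := by
            have h1 : ‖e‖ ≤ ‖v + e‖ + ‖v‖ := by
              calc ‖e‖ = ‖(v + e) - v‖ := by congr 1; abel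
                _ ≤ ‖v + e‖ + ‖v‖ := norm_sub_le _ _
            rw [hen] at h1; linarith
          have h0 : φ (v + e) = 0 := hsupp _ (by linarith)
          calc |φ v| = |φ v - φ (v + e)| := by rw [h0, sub_zero]
            _ ≤ ‖v - (v + e)‖ ^ γ := hφh _ _
            _ = 3 ^ γ := by
                rw [show v - (v + e) = -e by abel, norm_neg, hen]
            _ ≤ 3 ^ (1:ℝ) := Real.rpow_le_rpow_of_exponent_le (by norm_num) hγ1
            _ = 3 := Real.rpow_one 3
        · rw [hsupp v (not_le.1 hv), abs_zero]; norm_num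
      have hker : ∀ z : En n, ENNReal.ofReal |dil φ t (y' - z) * f z| ≤
          (closedBall y' t).indicator
            (fun z => ENNReal.ofReal (3 * t ^ (-(n:ℝ))) * ENNReal.ofReal |f z|) z := by
        intro z
        by_cases hz : z ∈ closedBall y' t
        · rw [Set.indicator_of_mem hz, ← ENNReal.ofReal_mul (by positivity)]
          refine ENNReal.ofReal_le_ofReal ?_
          rw [abs_mul]
          refine mul_le_mul_of_nonneg_right ?_ (abs_nonneg _)
          unfold dil
          rw [abs_mul, abs_of_nonneg (Real.rpow_nonneg ht.le _)]
          calc t ^ (-(n:ℝ)) * |φ (t⁻¹ • (y' - z))| ≤ t ^ (-(n:ℝ)) * 3 :=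
                mul_le_mul_of_nonneg_left (hφb _) (Real.rpow_nonneg ht.le _)
            _ = 3 * t ^ (-(n:ℝ)) := mul_comm _ _
        · rw [Set.indicator_of_notMem hz]
          have hdz : t < dist z y' := not_le.1 (fun hle => hz (mem_closedBall.2 hle))
          have hφ0 : φ (t⁻¹ • (y' - z)) = 0 := by
            refine hsupp _ ?_
            rw [norm_smul, norm_inv, Real.norm_eq_abs, abs_of_pos ht, ← dist_eq_norm,
              dist_comm y' z, inv_mul_eq_div]
            rw [lt_div_iff₀ ht]
            linarith
          unfold dil
          rw [hφ0, mul_zero, zero_mul, abs_zero, ENNReal.ofReal_zero]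
      have step1 : ENNReal.ofReal |∫ z, dil φ t (y' - z) * f z| ≤
          ENNReal.ofReal (3 * t ^ (-(n:ℝ))) * ∫⁻ z in closedBall y' t, ENNReal.ofReal |f z| := by
        calc ENNReal.ofReal |∫ z, dil φ t (y' - z) * f z|
            = (‖∫ z, dil φ t (y' - z) * f z‖₊ : ℝ≥0∞) := (Real.enorm_eq_ofReal_abs _).symm
          _ ≤ ∫⁻ z, (‖dil φ t (y' - z) * f z‖₊ : ℝ≥0∞) :=
              enorm_integral_le_lintegral_enorm _
          _ = ∫⁻ z, ENNReal.ofReal |dil φ t (y' - z) * f z| :=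
              lintegral_congr fun z => Real.enorm_eq_ofReal_abs _
          _ ≤ ∫⁻ z, (closedBall y' t).indicator
                (fun z => ENNReal.ofReal (3 * t ^ (-(n:ℝ))) * ENNReal.ofReal |f z|) z :=
              lintegral_mono hker
          _ = ∫⁻ z in closedBall y' t,
                ENNReal.ofReal (3 * t ^ (-(n:ℝ))) * ENNReal.ofReal |f z| :=
              lintegral_indicator measurableSet_closedBall _
          _ = ENNReal.ofReal (3 * t ^ (-(n:ℝ))) * ∫⁻ z in closedBall y' t, ENNReal.ofReal |f z| :=
              lintegral_const_mul' _ _ ENNReal.ofReal_ne_top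
      have hd1 : dist y' x < t := by rw [dist_comm]; exact hyt
      have hd2 : dist x y < r := mem_ball.1 hx
      by_cases hrt : r ≤ 2*t
      · -- far regime : decompose into annuli
        set F : En n → ℝ≥0∞ :=
          fun z => Set.indicator (ball y (2*r))ᶜ (fun z => ENNReal.ofReal |f z|) z with hF
        have hFeq : ∀ z, ENNReal.ofReal |f z| = F z := by
          intro z
          by_cases hz : z ∈ ball y (2*r)
          · simp only [hF]
            rw [Set.indicator_of_notMem (Set.notMem_compl_iff.2 hz), hfz z hz, abs_zero,
              ENNReal.ofReal_zero]
          · simp only [hF]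
            rw [Set.indicator_of_mem (Set.mem_compl hz)]
        have hsub : closedBall y' t ⊆ ball y (4*t) := by
          intro z hz
          have h1 : dist z y' ≤ t := mem_closedBall.1 hz
          have t1 := dist_triangle z y' y
          have t2 := dist_triangle y' x y
          rw [mem_ball]
          linarith
        set B : ℕ → Set (En n) := fun l =>
          if (2:ℝ)^l * r < 2*t then
            ball y ((2:ℝ)^(l+2) * r) \ ball y ((2:ℝ)^(l+1) * r) else (∅ : Set (En n)) with hB
        have hcover : ball y (4*t) \ ball y (2*r) ⊆ ⋃ l, B l := by
          rintro z ⟨hz4, hz2⟩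
          have hd2' : 2*r ≤ dist z y := not_lt.1 (fun hlt => hz2 (mem_ball.2 hlt))
          have hd4 : dist z y < 4*t := mem_ball.1 hz4
          have hdpos : 0 < dist z y := by linarith
          have hdr2 : (2:ℝ) ≤ dist z y / r := (le_div_iff₀ hr).2 (by linarith)
          have hm2 : 2 ≤ ⌊dist z y / r⌋₊ := Nat.le_floor (by exact_mod_cast hdr2)
          set k := Nat.log 2 ⌊dist z y / r⌋₊ with hk
          have hk1 : 0 < k := Nat.log_pos one_lt_two hm2
          have hlow : (2:ℝ)^k ≤ dist z y / r := by
            calc ((2:ℝ))^k = ((2^k : ℕ) : ℝ) := by push_cast; ring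
              _ ≤ (⌊dist z y / r⌋₊ : ℝ) := by
                  exact_mod_cast Nat.pow_log_le_self 2 (by omega)
              _ ≤ dist z y / r := Nat.floor_le (by positivity)
          have hhigh : dist z y / r < (2:ℝ)^(k+1) := by
            calc dist z y / r < (⌊dist z y / r⌋₊ : ℝ) + 1 := Nat.lt_floor_add_one _
              _ ≤ ((2^(k+1) : ℕ) : ℝ) := by
                  exact_mod_cast Nat.succ_le_of_lt (Nat.lt_pow_succ_log_self one_lt_two _)
              _ = (2:ℝ)^(k+1) := by push_cast; ring
          have hklow : (2:ℝ)^k * r ≤ dist z y := by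
            rw [← le_div_iff₀ hr]; exact hlow
          have hkhigh : dist z y < (2:ℝ)^(k+1) * r := by
            rw [← div_lt_iff₀ hr]; exact hhigh
          refine Set.mem_iUnion.2 ⟨k-1, ?_⟩
          have hkk : k - 1 + 1 = k := Nat.succ_pred_eq_of_pos hk1
          have hpw : (2:ℝ)^k = (2:ℝ)^(k-1) * 2 := by
            rw [← pow_succ, hkk]
          have hcond : (2:ℝ)^(k-1) * r < 2*t := by
            have h2 : (2:ℝ)^(k-1) * 2 * r < 4*t := by rw [← hpw]; linarith
            linarith
          simp only [hB]
          rw [if_pos hcond]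
          constructor
          · rw [mem_ball, show k - 1 + 2 = k + 1 by omega]
            exact hkhigh
          · rw [mem_ball, not_lt, show k - 1 + 1 = k from hkk]
            exact hklow
        have hJ : (∫⁻ z in closedBall y' t, ENNReal.ofReal |f z|) ≤
            ∑' l, if (2:ℝ)^l * r < 2*t then I l else 0 := by
          calc (∫⁻ z in closedBall y' t, ENNReal.ofReal |f z|)
              = ∫⁻ z in closedBall y' t, F z := lintegral_congr fun z => hFeq z
            _ ≤ ∫⁻ z in ball y (4*t), F z := lintegral_mono_set hsub
            _ = ∫⁻ z in ball y (4*t) \ ball y (2*r), ENNReal.ofReal |f z| := by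
                rw [hF, lintegral_indicator measurableSet_ball.compl _,
                  Measure.restrict_restrict measurableSet_ball.compl, Set.diff_eq,
                  Set.inter_comm]
            _ ≤ ∫⁻ z in ⋃ l, B l, ENNReal.ofReal |f z| := lintegral_mono_set hcover
            _ ≤ ∑' l, ∫⁻ z in B l, ENNReal.ofReal |f z| := lintegral_iUnion_le _ _
            _ = ∑' l, if (2:ℝ)^l * r < 2*t then I l else 0 := by
                refine tsum_congr fun l => ?_
                by_cases hc : (2:ℝ)^l * r < 2*t
                · rw [if_pos hc]
                  simp only [hB]
                  rw [if_pos hc, hI]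
                · rw [if_neg hc]
                  simp only [hB]
                  rw [if_neg hc, Measure.restrict_empty, lintegral_zero_measure]
        refine step1.trans ?_
        calc ENNReal.ofReal (3 * t ^ (-(n:ℝ))) * ∫⁻ z in closedBall y' t, ENNReal.ofReal |f z|
            ≤ ENNReal.ofReal (3 * t ^ (-(n:ℝ))) *
              ∑' l, if (2:ℝ)^l * r < 2*t then I l else 0 := mul_le_mul_right hJ _
          _ = ∑' l, ρ l t := by
              rw [← ENNReal.tsum_mul_left]
              refine tsum_congr fun l => ?_
              simp only [hρ]
              rw [mul_ite, mul_zero]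
      · -- near regime : the integral vanishes
        have hz0 : (∫⁻ z in closedBall y' t, ENNReal.ofReal |f z|) = 0 := by
          have hptz : ∀ z ∈ closedBall y' t, ENNReal.ofReal |f z| = (fun _ => (0:ℝ≥0∞)) z := by
            intro z hz
            have h1 : dist z y' ≤ t := mem_closedBall.1 hz
            have t1 := dist_triangle z y' y
            have t2 := dist_triangle y' x y
            have hzb : dist z y < 2*r := by linarith [not_le.1 hrt]
            rw [hfz z (mem_ball.2 hzb), abs_zero, ENNReal.ofReal_zero]
          rw [setLIntegral_congr_fun measurableSet_closedBall hptz,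
            lintegral_zero]
        refine step1.trans ?_
        rw [hz0, mul_zero]
        exact zero_le
    -- the pointwise bound for A_γ
    have hA : ∀ q : En n × ℝ, q ∈ cone →
        ENNReal.ofReal (Agamma γ f q.1 q.2) ≤ ∑' l, ρ l q.2 := by
      intro q hq
      have hq' : dist x q.1 < q.2 := by rw [hcone] at hq; exact hq
      by_cases hB : (∑' l, ρ l q.2) = ∞
      · exact hB ▸ le_top
      · refine ENNReal.ofReal_le_of_le_toReal ?_
        unfold Agamma
        refine Real.iSup_le (fun φ => Real.iSup_le (fun hφ => ?_) ENNReal.toReal_nonneg)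
          ENNReal.toReal_nonneg
        exact (ENNReal.ofReal_le_iff_le_toReal hB).1 (hconv q.1 q.2 hq' φ hφ)
    -- pointwise bound for the cone integrand
    have hpt : ∀ p : En n × ℝ, Set.indicator {q : En n × ℝ | dist x q.1 < q.2}
        (fun q => ENNReal.ofReal (Agamma γ f q.1 q.2) ^ 2 /
          ENNReal.ofReal (q.2 ^ ((n:ℝ) + 1))) p ≤ (∑' l, h l p) ^ (2:ℝ) := by
      intro p
      rw [← hcone]
      by_cases hp : p ∈ cone
      · rw [Set.indicator_of_mem hp]
        refine le_trans (ENNReal.div_le_div_right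
          (pow_le_pow_left' (hA p hp) 2) _) (le_of_eq ?_)
        have htsum : ∑' l, h l p =
            (∑' l, ρ l p.2) * ENNReal.ofReal (p.2 ^ ((n:ℝ)+1)) ^ (-(1:ℝ)/2) := by
          rw [← ENNReal.tsum_mul_right]
          refine tsum_congr fun l => ?_
          simp only [hh]
          rw [Set.indicator_of_mem hp]
        rw [htsum, ENNReal.mul_rpow_of_nonneg _ _ (by norm_num : (0:ℝ) ≤ 2),
          ← ENNReal.rpow_mul, show (-(1:ℝ)/2) * 2 = -1 by norm_num, ENNReal.rpow_neg_one,
          div_eq_mul_inv]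
        congr 1
        rw [← ENNReal.rpow_natCast]
        norm_num
      · rw [Set.indicator_of_notMem hp]
        exact zero_le
    -- per-piece L² norm computation
    have ha_pos : ∀ l : ℕ, (0:ℝ) < (2:ℝ)^l * r / 2 := fun l => by positivity
    have hnorm : ∀ l, (∫⁻ q : En n × ℝ, h l q ^ (2:ℝ)) ^ ((1:ℝ)/2) ≤ K * ((V l)⁻¹ * I l) := by
      intro l
      set a : ℝ := (2:ℝ)^l * r / 2 with ha
      have hap : 0 < a := ha_pos l
      have h2a : 2 * a = (2:ℝ)^l * r := by rw [ha]; ring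
      have hvol : ∀ t : ℝ, 0 ≤ t → volume (ball x t) = ENNReal.ofReal (t^n) * cn := by
        intro t ht'
        rw [hcn, Measure.addHaar_ball (μ := volume) x ht', finrank_euclideanSpace_fin]
      -- slice the product integral
      have hslice : (∫⁻ q : En n × ℝ, h l q ^ (2:ℝ)) =
          ∫⁻ t : ℝ, (ρ l t * ENNReal.ofReal (t ^ ((n:ℝ)+1)) ^ (-(1:ℝ)/2)) ^ (2:ℝ) *
            volume (ball x t) := by
        have hm2 : Measurable fun q : En n × ℝ => h l q ^ (2:ℝ) :=
          Measurable.comp (by fun_prop : Measurable fun z : ℝ≥0∞ => z ^ (2:ℝ)) (hmeas l)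
        rw [MeasureTheory.Measure.volume_eq_prod, lintegral_prod_symm' _ hm2]
        refine lintegral_congr fun t => ?_
        have hin : ∀ y' : En n, h l (y', t) ^ (2:ℝ) = Set.indicator (ball x t)
            (fun _ => (ρ l t * ENNReal.ofReal (t ^ ((n:ℝ)+1)) ^ (-(1:ℝ)/2)) ^ (2:ℝ)) y' := by
          intro y'
          by_cases hm : dist x y' < t
          · have hmem : (y', t) ∈ cone := by rw [hcone]; exact hm
            have hb : y' ∈ ball x t := mem_ball.2 (by rw [dist_comm]; exact hm)
            simp only [hh]
            rw [Set.indicator_of_mem hmem, Set.indicator_of_mem hb]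
          · have hmem : (y', t) ∉ cone := by rw [hcone]; exact hm
            have hb : y' ∉ ball x t := fun hb => hm (by rw [dist_comm]; exact mem_ball.1 hb)
            simp only [hh]
            rw [Set.indicator_of_notMem hmem, Set.indicator_of_notMem hb,
              ENNReal.zero_rpow_of_pos (by norm_num)]
        simp_rw [hin]
        rw [lintegral_indicator measurableSet_ball _, setLIntegral_const]
      -- identify the t-integrand
      have hintegrand : ∀ t : ℝ,
          (ρ l t * ENNReal.ofReal (t ^ ((n:ℝ)+1)) ^ (-(1:ℝ)/2)) ^ (2:ℝ) * volume (ball x t)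
          = Set.indicator (Set.Ioi a)
              (fun t => (I l ^ (2:ℝ) * cn * ENNReal.ofReal 9) *
                ENNReal.ofReal (t ^ (-(2*(n:ℝ)+1)))) t := by
        intro t
        by_cases htl : a < t
        · have ht : 0 < t := hap.trans htl
          have hcond : (2:ℝ)^l * r < 2*t := by rw [← h2a]; linarith
          rw [Set.indicator_of_mem (Set.mem_Ioi.2 htl)]
          simp only [hρ]
          rw [if_pos hcond, hvol t ht.le]
          have hApos : (0:ℝ) < 3 * t ^ (-(n:ℝ)) := by positivity
          have hBpos : (0:ℝ) < t ^ ((n:ℝ)+1) := Real.rpow_pos_of_pos ht _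
          have key : ENNReal.ofReal (3 * t ^ (-(n:ℝ))) ^ (2:ℝ) *
              (ENNReal.ofReal (t ^ ((n:ℝ)+1)) ^ (-(1:ℝ)/2)) ^ (2:ℝ) *
              ENNReal.ofReal (t^n) =
              ENNReal.ofReal 9 * ENNReal.ofReal (t ^ (-(2*(n:ℝ)+1))) := by
            rw [← ENNReal.rpow_mul, show (-(1:ℝ)/2) * 2 = -1 by norm_num]
            rw [ENNReal.ofReal_rpow_of_pos hApos, ENNReal.ofReal_rpow_of_pos hBpos]
            rw [← ENNReal.ofReal_mul (by positivity), ← ENNReal.ofReal_mul (by positivity)]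
            rw [← ENNReal.ofReal_mul (by norm_num)]
            congr 1
            rw [Real.mul_rpow (by norm_num) (Real.rpow_nonneg ht.le _)]
            rw [← Real.rpow_natCast t n, ← Real.rpow_mul ht.le, ← Real.rpow_mul ht.le]
            rw [show (3:ℝ) ^ (2:ℝ) = 9 by
              rw [show (2:ℝ) = ((2:ℕ):ℝ) by norm_num, Real.rpow_natCast]; norm_num]
            rw [mul_assoc, mul_assoc, ← Real.rpow_add ht, ← Real.rpow_add ht]
            congr 1
            ring
          calc (ENNReal.ofReal (3 * t ^ (-(n:ℝ))) * I l *
                ENNReal.ofReal (t ^ ((n:ℝ)+1)) ^ (-(1:ℝ)/2)) ^ (2:ℝ) *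
                (ENNReal.ofReal (t^n) * cn)
              = ENNReal.ofReal (3 * t ^ (-(n:ℝ))) ^ (2:ℝ) * I l ^ (2:ℝ) *
                (ENNReal.ofReal (t ^ ((n:ℝ)+1)) ^ (-(1:ℝ)/2)) ^ (2:ℝ) *
                (ENNReal.ofReal (t^n) * cn) := by
                rw [ENNReal.mul_rpow_of_nonneg _ _ (by norm_num : (0:ℝ) ≤ 2),
                  ENNReal.mul_rpow_of_nonneg _ _ (by norm_num : (0:ℝ) ≤ 2)]
            _ = (I l ^ (2:ℝ) * cn) *
                (ENNReal.ofReal (3 * t ^ (-(n:ℝ))) ^ (2:ℝ) *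
                 (ENNReal.ofReal (t ^ ((n:ℝ)+1)) ^ (-(1:ℝ)/2)) ^ (2:ℝ) *
                 ENNReal.ofReal (t^n)) := by ring
            _ = (I l ^ (2:ℝ) * cn * ENNReal.ofReal 9) *
                ENNReal.ofReal (t ^ (-(2*(n:ℝ)+1))) := by rw [key]; ring
        · rw [Set.indicator_of_notMem (fun hc => htl (Set.mem_Ioi.1 hc))]
          have hcond : ¬ ((2:ℝ)^l * r < 2*t) := by rw [← h2a]; intro hc; exact htl (by linarith)
          simp only [hρ]
          rw [if_neg hcond, zero_mul, ENNReal.zero_rpow_of_pos (by norm_num), zero_mul]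
      have hcfin : I l ^ (2:ℝ) * cn * ENNReal.ofReal 9 ≠ ∞ :=
        ENNReal.mul_ne_top
          (ENNReal.mul_ne_top (ENNReal.rpow_ne_top_of_nonneg (by norm_num) (hIfin l)) hcnt)
          ENNReal.ofReal_ne_top
      have hlint : (∫⁻ q : En n × ℝ, h l q ^ (2:ℝ)) =
          (I l ^ (2:ℝ) * cn * ENNReal.ofReal 9) *
            ENNReal.ofReal (a ^ (-(2*(n:ℝ))) / (2*(n:ℝ))) := by
        rw [hslice]
        rw [lintegral_congr hintegrand]
        rw [lintegral_indicator measurableSet_Ioi _, lintegral_const_mul' _ _ hcfin,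
          aux_tint hn hap]
      rw [hlint]
      -- take square roots and compare with the annulus volume
      rw [ENNReal.mul_rpow_of_nonneg _ _ (by norm_num : (0:ℝ) ≤ 1/2),
        ENNReal.mul_rpow_of_nonneg _ _ (by norm_num : (0:ℝ) ≤ 1/2),
        ENNReal.mul_rpow_of_nonneg _ _ (by norm_num : (0:ℝ) ≤ 1/2)]
      have hI12 : (I l ^ (2:ℝ)) ^ ((1:ℝ)/2) = I l := by
        rw [← ENNReal.rpow_mul]; norm_num
      rw [hI12]
      set R : ℝ := (2:ℝ)^(l+2) * r with hR
      have hRpos : 0 < R := by positivity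
      have hRa : R = 8 * a := by rw [hR, ha]; ring
      have hVl : V l = ENNReal.ofReal (R^n) * cn := by
        simp only [hV]
        rw [← hR, hcn, Measure.addHaar_ball (μ := volume) y hRpos.le,
          finrank_euclideanSpace_fin]
      have hVinv : (V l)⁻¹ = ENNReal.ofReal ((R^n)⁻¹) * cn⁻¹ := by
        rw [hVl, ENNReal.mul_inv (Or.inl (by positivity)) (Or.inl ENNReal.ofReal_ne_top),
          ENNReal.ofReal_inv_of_pos (by positivity)]
      have hcnhalf : cn ^ ((3:ℝ)/2) * cn⁻¹ = cn ^ ((1:ℝ)/2) := by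
        rw [← ENNReal.rpow_neg_one cn, ← ENNReal.rpow_add _ _ hcn0 hcnt]
        norm_num
      have hKey : cn ^ ((1:ℝ)/2) * (ENNReal.ofReal 9 ^ ((1:ℝ)/2) *
          ENNReal.ofReal (a ^ (-(2*(n:ℝ))) / (2*(n:ℝ))) ^ ((1:ℝ)/2)) ≤ K * (V l)⁻¹ := by
        have e9 : ENNReal.ofReal 9 ^ ((1:ℝ)/2) = ENNReal.ofReal 3 := by
          rw [ENNReal.ofReal_rpow_of_pos (by norm_num)]
          congr 1
          rw [show (9:ℝ) = 3 ^ (2:ℝ) by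
            rw [show (2:ℝ) = ((2:ℕ):ℝ) by norm_num, Real.rpow_natCast]; norm_num]
          rw [← Real.rpow_mul (by norm_num)]
          norm_num
        have h2n : (0:ℝ) < 2*(n:ℝ) := by positivity
        have ea : ENNReal.ofReal (a ^ (-(2*(n:ℝ))) / (2*(n:ℝ))) ^ ((1:ℝ)/2) =
            ENNReal.ofReal (a ^ (-(n:ℝ)) * (2*(n:ℝ)) ^ (-(1:ℝ)/2)) := by
          rw [ENNReal.ofReal_rpow_of_pos (by positivity)]
          congr 1
          rw [div_eq_mul_inv, Real.mul_rpow (Real.rpow_nonneg hap.le _) (by positivity),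
            ← Real.rpow_mul hap.le, Real.inv_rpow h2n.le, ← Real.rpow_neg h2n.le]
          congr 1
          · congr 1; ring
          · congr 1; norm_num
        rw [e9, ea, hK, hVinv, ← ENNReal.ofReal_mul (show (0:ℝ) ≤ 3 by norm_num)]
        calc cn ^ ((1:ℝ)/2) * ENNReal.ofReal (3 * (a ^ (-(n:ℝ)) * (2*(n:ℝ)) ^ (-(1:ℝ)/2)))
            ≤ cn ^ ((1:ℝ)/2) *
              ENNReal.ofReal ((3 * 8^n * (2*(n:ℝ)) ^ (-(1:ℝ)/2)) * ((R^n)⁻¹)) := by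
              refine mul_le_mul_right (ENNReal.ofReal_le_ofReal (le_of_eq ?_)) _
              rw [hRa, mul_pow, Real.rpow_neg hap.le, Real.rpow_natCast]
              have h8 : ((8:ℝ)^n) ≠ 0 := by positivity
              have han : ((a:ℝ)^n) ≠ 0 := by positivity
              field_simp
          _ = cn ^ ((3:ℝ)/2) * ENNReal.ofReal (3 * 8^n * (2*(n:ℝ)) ^ (-(1:ℝ)/2)) *
              (ENNReal.ofReal ((R^n)⁻¹) * cn⁻¹) := by
              rw [ENNReal.ofReal_mul (by positivity), ← hcnhalf]
              ring
      calc I l * cn ^ ((1:ℝ)/2) * ENNReal.ofReal 9 ^ ((1:ℝ)/2) *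
            ENNReal.ofReal (a ^ (-(2*(n:ℝ))) / (2*(n:ℝ))) ^ ((1:ℝ)/2)
          = cn ^ ((1:ℝ)/2) * (ENNReal.ofReal 9 ^ ((1:ℝ)/2) *
            ENNReal.ofReal (a ^ (-(2*(n:ℝ))) / (2*(n:ℝ))) ^ ((1:ℝ)/2)) * I l := by ring
        _ ≤ K * (V l)⁻¹ * I l := mul_le_mul_left hKey _
        _ = K * ((V l)⁻¹ * I l) := by ring
    -- assemble
    have hfinal : Sgamma γ f x ≤ K * ∑' l, (V l)⁻¹ * I l := by
      unfold Sgamma coneInt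
      refine le_trans (ENNReal.rpow_le_rpow (lintegral_mono hpt) (by norm_num)) ?_
      refine le_trans (aux_mink volume h hmeas) ?_
      refine le_trans (ENNReal.tsum_le_tsum hnorm) ?_
      rw [ENNReal.tsum_mul_left]
    refine hfinal.trans (mul_le_mul_left ?_ _)
    calc K = ENNReal.ofReal K.toReal := (ENNReal.ofReal_toReal hKt).symm
      _ ≤ ENNReal.ofReal (K.toReal + 1) := ENNReal.ofReal_le_ofReal (by linarith)


end
end

section
/- Let 0<γ≤1, let y ∈ ℝⁿ and r>0, and let f⃗=(f₁,f₂,…) be a sequence of locally integrable functions on ℝⁿ; set f_j^∞ = f_j·χ_{B(y,2r)^c}. Then there is a constant C>0, independent of f⃗, y, r, such that for every x ∈ B(y,r), ( Σ_{j=1}^∞ |S_γ(f_j^∞)(x)|² )^{1/2} ≤ C Σ_{l=1}^∞ (1/|B(y,2^{l+1}r)|) ∫_{B(y,2^{l+1}r)} ( Σ_{j=1}^∞ |f_j(z)|² )^{1/2} dz. -/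
open MeasureTheory Metric Set
open scoped ENNReal NNReal Real

noncomputable section

/-! ### Auxiliary lemmas for Statement 12 -/

section Aux12

lemma sqrt_sq_e (a : ℝ≥0∞) : (a ^ (1/2 : ℝ)) ^ (2 : ℕ) = a := by
  rw [← ENNReal.rpow_natCast, ← ENNReal.rpow_mul]; norm_num

lemma sq_sqrt_e (a : ℝ≥0∞) : (a ^ (2 : ℕ)) ^ (1/2 : ℝ) = a := by
  rw [← ENNReal.rpow_natCast, ← ENNReal.rpow_mul]; norm_num

lemma tsum_sqrt_le (a : ℕ → ℝ≥0∞) :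
    (∑' i, a i) ^ (1/2 : ℝ) ≤ ∑' i, (a i) ^ (1/2 : ℝ) := by
  set S := ∑' i, (a i) ^ (1/2 : ℝ) with hS
  have h : ∑' i, a i ≤ S ^ (2 : ℕ) := by
    calc ∑' i, a i = ∑' i, (a i ^ (1/2:ℝ)) * (a i ^ (1/2:ℝ)) := by
          refine tsum_congr fun i => ?_
          rw [← pow_two, sqrt_sq_e]
    _ ≤ ∑' i, (a i ^ (1/2:ℝ)) * S := by
          gcongr with i
          exact ENNReal.le_tsum i
    _ = S * S := ENNReal.tsum_mul_right
    _ = S ^ (2:ℕ) := (pow_two S).symm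
  calc (∑' i, a i) ^ (1/2:ℝ) ≤ (S ^ (2:ℕ)) ^ (1/2:ℝ) :=
        ENNReal.rpow_le_rpow h (by norm_num)
  _ = S := sq_sqrt_e S

lemma finset_cs (F : Finset ℕ) (a b : ℕ → ℝ≥0∞) :
    ∑ j ∈ F, a j * b j ≤
      (∑ j ∈ F, a j ^ (2:ℕ)) ^ (1/2:ℝ) * (∑ j ∈ F, b j ^ (2:ℕ)) ^ (1/2:ℝ) := by
  classical
  have hconj : Real.HolderConjugate 2 2 := Real.HolderConjugate.two_two
  have key := ENNReal.lintegral_mul_le_Lp_mul_Lq (Measure.count : Measure ↥F) hconj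
    (f := fun j : ↥F => a ↑j) (g := fun j : ↥F => b ↑j)
    (measurable_of_countable _).aemeasurable (measurable_of_countable _).aemeasurable
  have hpow : ∀ x : ℝ≥0∞, x ^ (2:ℝ) = x ^ (2:ℕ) := fun x => by
    rw [← ENNReal.rpow_natCast]; norm_num
  simp only [lintegral_count, hpow, Pi.mul_apply] at key
  rw [Finset.tsum_subtype F (fun j => a j * b j),
    Finset.tsum_subtype F (fun j => a j ^ (2:ℕ)),
    Finset.tsum_subtype F (fun j => b j ^ (2:ℕ))] at key
  simpa using key

/-- Minkowski's integral inequality for `ℓ²`-valued functions. -/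
lemma mink {n : ℕ} (f : ℕ → En n → ℝ) (B : Set (En n))
    (hmeas : ∀ j, AEMeasurable (f j) (volume.restrict B))
    (hfin : ∀ j, (∫⁻ z in B, ENNReal.ofReal |f j z|) ≠ ∞) :
    ∑' j, (∫⁻ z in B, ENNReal.ofReal |f j z|) ^ (2:ℕ) ≤ (∫⁻ z in B, l2 f z) ^ (2:ℕ) := by
  classical
  set a : ℕ → ℝ≥0∞ := fun j => ∫⁻ z in B, ENNReal.ofReal |f j z| with ha
  set Cv := ∫⁻ z in B, l2 f z with hC
  rw [ENNReal.tsum_eq_iSup_sum]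
  refine iSup_le fun F => ?_
  set A := ∑ j ∈ F, a j ^ (2:ℕ) with hA
  have hb : ∀ j : ℕ, AEMeasurable (fun z => ENNReal.ofReal |f j z|) (volume.restrict B) :=
    fun j => ENNReal.measurable_ofReal.comp_aemeasurable
      (continuous_abs.measurable.comp_aemeasurable (hmeas j))
  have hAtop : A ≠ ∞ := by
    rw [hA]
    refine (ENNReal.sum_lt_top.2 fun j _ => ?_).ne
    exact ENNReal.pow_lt_top (lt_of_le_of_ne le_top (hfin j))
  have key : A ≤ A ^ (1/2:ℝ) * Cv := by
    have h1 : A = ∫⁻ z in B, ∑ j ∈ F, a j * ENNReal.ofReal |f j z| := by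
      rw [lintegral_finset_sum' F (fun j _ => ((hb j).const_mul _))]
      refine Finset.sum_congr rfl fun j _ => ?_
      rw [lintegral_const_mul' _ _ (hfin j), ← pow_two]
    calc A = ∫⁻ z in B, ∑ j ∈ F, a j * ENNReal.ofReal |f j z| := h1
    _ ≤ ∫⁻ z in B, A ^ (1/2:ℝ) * l2 f z := by
          apply lintegral_mono
          intro z
          refine le_trans (finset_cs F a (fun j => ENNReal.ofReal |f j z|)) ?_
          rw [hA]
          apply mul_le_mul' le_rfl
          rw [l2]
          exact ENNReal.rpow_le_rpow (ENNReal.sum_le_tsum F) (by norm_num)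
    _ = A ^ (1/2:ℝ) * Cv := lintegral_const_mul' _ _
          (ENNReal.rpow_ne_top_of_nonneg (by norm_num) hAtop)
  by_cases hA0 : A = 0
  · rw [hA0]; exact zero_le
  · have hh0 : A ^ (1/2:ℝ) ≠ 0 := by
      simp [ENNReal.rpow_eq_zero_iff, hA0, hAtop]
    have hht : A ^ (1/2:ℝ) ≠ ∞ := ENNReal.rpow_ne_top_of_nonneg (by norm_num) hAtop
    have h2 : A ^ (1/2:ℝ) * A ^ (1/2:ℝ) ≤ A ^ (1/2:ℝ) * Cv := by
      rw [← pow_two, sqrt_sq_e]; exact key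
    have h3 : A ^ (1/2:ℝ) ≤ Cv := (ENNReal.mul_le_mul_iff_right hh0 hht).1 h2
    calc A = (A ^ (1/2:ℝ)) ^ (2:ℕ) := (sqrt_sq_e A).symm
    _ ≤ Cv ^ (2:ℕ) := pow_le_pow_left₀ (zero_le) h3 2

lemma dil_eq_zero {n : ℕ} {γ : ℝ} {φ : En n → ℝ} (hφ : φ ∈ Cfam n γ) {t : ℝ} (ht : 0 < t)
    {w : En n} (hw : t < ‖w‖) : dil φ t w = 0 := by
  have hsupp := hφ.1
  rw [dil]
  convert mul_zero _ using 2
  by_contra h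
  have h1 := hsupp (Function.mem_support.2 h)
  rw [mem_closedBall, dist_zero_right, norm_smul, norm_inv, Real.norm_eq_abs,
    abs_of_pos ht] at h1
  have h2 : ‖w‖ ≤ t := by
    rw [inv_mul_le_iff₀ ht] at h1
    simpa using h1
  linarith

lemma phi_le_two {n : ℕ} (hn : 0 < n) {γ : ℝ} (hγ1 : γ ≤ 1) {φ : En n → ℝ}
    (hφ : φ ∈ Cfam n γ) (v : En n) : |φ v| ≤ 2 := by
  obtain ⟨hsupp, -, hhold⟩ := hφ
  by_cases hv : φ v = 0
  · rw [hv]; norm_num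
  · have hv1 : ‖v‖ ≤ 1 := by
      have := hsupp (Function.mem_support.2 hv)
      rwa [mem_closedBall, dist_zero_right] at this
    obtain ⟨v', hn1, hd1, hd2⟩ :
        ∃ v' : En n, 1 < ‖v'‖ ∧ 1 ≤ ‖v - v'‖ ∧ ‖v - v'‖ ≤ 2 := by
      by_cases hv0 : v = 0
      · subst hv0
        refine ⟨(3/2 : ℝ) • EuclideanSpace.single ⟨0, hn⟩ (1:ℝ), ?_, ?_, ?_⟩
        · simp [norm_smul, EuclideanSpace.norm_single, Real.norm_eq_abs]
          norm_num
        · rw [zero_sub, norm_neg]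
          simp [norm_smul, EuclideanSpace.norm_single, Real.norm_eq_abs]
          norm_num
        · rw [zero_sub, norm_neg]
          simp [norm_smul, EuclideanSpace.norm_single, Real.norm_eq_abs]
          norm_num
      · refine ⟨v + ‖v‖⁻¹ • v, ?_, ?_, ?_⟩
        · have : v + ‖v‖⁻¹ • v = (1 + ‖v‖⁻¹) • v := by
            rw [add_smul, one_smul]
          rw [this, norm_smul, Real.norm_eq_abs]
          have hnv : 0 < ‖v‖ := norm_pos_iff.2 hv0
          have : |1 + ‖v‖⁻¹| = 1 + ‖v‖⁻¹ := abs_of_pos (by positivity)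
          rw [this]
          have h4 : (1 + ‖v‖⁻¹) * ‖v‖ = ‖v‖ + 1 := by
            field_simp
          rw [h4]
          linarith
        · have : v - (v + ‖v‖⁻¹ • v) = -(‖v‖⁻¹ • v) := by abel
          rw [this, norm_neg, norm_smul, Real.norm_eq_abs]
          have hnv : 0 < ‖v‖ := norm_pos_iff.2 hv0
          rw [abs_of_pos (by positivity), inv_mul_cancel₀ hnv.ne']
        · have : v - (v + ‖v‖⁻¹ • v) = -(‖v‖⁻¹ • v) := by abel
          rw [this, norm_neg, norm_smul, Real.norm_eq_abs]
          have hnv : 0 < ‖v‖ := norm_pos_iff.2 hv0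
          rw [abs_of_pos (by positivity), inv_mul_cancel₀ hnv.ne']
          norm_num
    have hφv' : φ v' = 0 := by
      by_contra h
      have := hsupp (Function.mem_support.2 h)
      rw [mem_closedBall, dist_zero_right] at this
      linarith
    have h5 := hhold v v'
    rw [hφv', sub_zero] at h5
    refine h5.trans ?_
    calc ‖v - v'‖ ^ γ ≤ ‖v - v'‖ ^ (1:ℝ) :=
          Real.rpow_le_rpow_of_exponent_le hd1 hγ1
    _ = ‖v - v'‖ := Real.rpow_one _
    _ ≤ 2 := hd2

lemma Agamma_le_zero_of_zero {n : ℕ} {γ : ℝ} {h : En n → ℝ} (hz : ∀ z, h z = 0)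
    (u : En n) (t : ℝ) : Agamma γ h u t ≤ 0 := by
  refine Real.iSup_le (fun φ => ?_) le_rfl
  by_cases hφ : φ ∈ Cfam n γ
  · rw [ciSup_pos hφ]
    have heq : (fun z => dil φ t (u - z) * h z) = fun _ => (0:ℝ) := by
      funext z; rw [hz z, mul_zero]
    rw [heq, integral_zero, abs_zero]
  · haveI : IsEmpty (φ ∈ Cfam n γ) := ⟨hφ⟩
    rw [Real.iSup_of_isEmpty]

lemma Sgamma_eq_zero {n : ℕ} {γ : ℝ} {h : En n → ℝ} {x : En n}
    (hzero : ∀ u t, Agamma γ h u t ≤ 0) : Sgamma γ h x = 0 := by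
  rw [Sgamma, coneInt]
  have h0 : ∀ p : En n × ℝ, Set.indicator {q : En n × ℝ | dist x q.1 < q.2}
      (fun q => ENNReal.ofReal (Agamma γ h q.1 q.2) ^ 2 /
        ENNReal.ofReal (q.2 ^ ((n:ℝ)+1))) p = 0 := by
    intro p
    by_cases hp : p ∈ {q : En n × ℝ | dist x q.1 < q.2}
    · rw [Set.indicator_of_mem hp, ENNReal.ofReal_of_nonpos (hzero _ _)]
      simp
    · exact Set.indicator_of_notMem hp _
  rw [lintegral_congr h0, lintegral_zero, ENNReal.zero_rpow_of_pos (by norm_num)]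

lemma ofReal_Agamma_le {n : ℕ} (hn : 0 < n) {γ : ℝ} (hγ1 : γ ≤ 1) {g f : En n → ℝ}
    (hfl : LocallyIntegrable f volume) (hg : ∀ z, |g z| ≤ |f z|) {u : En n} {t : ℝ}
    (ht : 0 < t) :
    ENNReal.ofReal (Agamma γ g u t) ≤
      ENNReal.ofReal (2 * (t^n)⁻¹) * ∫⁻ z in closedBall u t, ENNReal.ofReal |f z| := by
  set J := ∫⁻ z in closedBall u t, ENNReal.ofReal |f z| with hJ
  have hJtop : J ≠ ∞ := by
    have h1 : IntegrableOn f (closedBall u t) volume :=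
      hfl.integrableOn_isCompact (isCompact_closedBall u t)
    have h2 := h1.hasFiniteIntegral
    rw [HasFiniteIntegral] at h2
    have h3 : J = ∫⁻ z in closedBall u t, (‖f z‖₊ : ℝ≥0∞) := by
      rw [hJ]; congr 1; funext z; exact (Real.enorm_eq_ofReal_abs (f z)).symm
    rw [h3]
    exact h2.ne
  have hMtop : ENNReal.ofReal (2 * (t^n)⁻¹) * J ≠ ∞ :=
    ENNReal.mul_ne_top ENNReal.ofReal_ne_top hJtop
  have hbound : Agamma γ g u t ≤ (ENNReal.ofReal (2 * (t^n)⁻¹) * J).toReal := by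
    refine Real.iSup_le (fun φ => ?_) ENNReal.toReal_nonneg
    by_cases hφ : φ ∈ Cfam n γ
    · rw [ciSup_pos hφ]
      have h1 := norm_integral_le_lintegral_norm (μ := (volume : Measure (En n)))
        (fun z => dil φ t (u - z) * g z)
      rw [Real.norm_eq_abs] at h1
      refine h1.trans ?_
      have h2 : (∫⁻ z, ENNReal.ofReal ‖dil φ t (u - z) * g z‖) ≤
          ENNReal.ofReal (2 * (t^n)⁻¹) * J := by
        calc ∫⁻ z, ENNReal.ofReal ‖dil φ t (u - z) * g z‖
            ≤ ∫⁻ z, (closedBall u t).indicator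
                (fun z => ENNReal.ofReal (2 * (t^n)⁻¹) * ENNReal.ofReal |f z|) z := by
              apply lintegral_mono
              intro z
              beta_reduce
              by_cases hz : ‖u - z‖ ≤ t
              · have hz' : z ∈ closedBall u t := by
                  rw [mem_closedBall, dist_eq_norm, ← norm_neg]
                  simpa [neg_sub] using hz
                rw [Set.indicator_of_mem hz', Real.norm_eq_abs, abs_mul,
                  ← ENNReal.ofReal_mul (by positivity)]
                apply ENNReal.ofReal_le_ofReal
                have hd : |dil φ t (u - z)| ≤ 2 * (t^n)⁻¹ := by
                  rw [dil, abs_mul]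
                  have h3 : |t ^ (-(n:ℝ))| = (t^n)⁻¹ := by
                    rw [abs_of_nonneg (Real.rpow_nonneg ht.le _), Real.rpow_neg ht.le,
                      Real.rpow_natCast]
                  rw [h3]
                  calc (t^n)⁻¹ * |φ (t⁻¹ • (u - z))| ≤ (t^n)⁻¹ * 2 := by
                        apply mul_le_mul_of_nonneg_left (phi_le_two hn hγ1 hφ _)
                        positivity
                  _ = 2 * (t^n)⁻¹ := mul_comm _ _
                exact mul_le_mul hd (hg z) (abs_nonneg _) (by positivity)
              · push_neg at hz
                rw [dil_eq_zero hφ ht hz, zero_mul]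
                simp
        _ = ENNReal.ofReal (2 * (t^n)⁻¹) * J := by
              rw [lintegral_indicator measurableSet_closedBall,
                lintegral_const_mul' _ _ ENNReal.ofReal_ne_top]
      exact ENNReal.toReal_mono hMtop h2
    · haveI : IsEmpty (φ ∈ Cfam n γ) := ⟨hφ⟩
      rw [Real.iSup_of_isEmpty]
      exact ENNReal.toReal_nonneg
  calc ENNReal.ofReal (Agamma γ g u t) ≤
      ENNReal.ofReal ((ENNReal.ofReal (2 * (t^n)⁻¹) * J).toReal) :=
        ENNReal.ofReal_le_ofReal hbound
  _ = ENNReal.ofReal (2 * (t^n)⁻¹) * J := ENNReal.ofReal_toReal hMtop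

lemma Agamma_far_le_zero {n : ℕ} {γ : ℝ} {f : En n → ℝ} {y x u : En n} {r t : ℝ}
    (hx : x ∈ ball y r) (hu : dist x u < t) (ht : t ≤ r/2) :
    Agamma γ ((ball y (2*r))ᶜ.indicator f) u t ≤ 0 := by
  have ht0 : 0 < t := lt_of_le_of_lt dist_nonneg hu
  refine Real.iSup_le (fun φ => ?_) le_rfl
  by_cases hφ : φ ∈ Cfam n γ
  · rw [ciSup_pos hφ]
    have heq : (fun z => dil φ t (u - z) * (ball y (2*r))ᶜ.indicator f z) =
        fun _ => (0:ℝ) := by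
      funext z
      by_cases hz : ‖u - z‖ ≤ t
      · have hz2 : z ∈ ball y (2*r) := by
          rw [mem_ball]
          have h1 : dist z u ≤ t := by
            rw [dist_comm, dist_eq_norm]; exact hz
          have h2 : dist u x < t := by rw [dist_comm]; exact hu
          have h3 : dist x y < r := mem_ball.1 hx
          calc dist z y ≤ dist z u + dist u x + dist x y := dist_triangle4 _ _ _ _
          _ < t + t + r := by
                have := add_lt_add_of_le_of_lt h1 h2
                linarith
          _ ≤ 2*r := by linarith
        rw [Set.indicator_of_notMem (by simp [hz2]), mul_zero]
      · push_neg at hz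
        rw [dil_eq_zero hφ ht0 hz, zero_mul]
    rw [heq, integral_zero, abs_zero]
  · haveI : IsEmpty (φ ∈ Cfam n γ) := ⟨hφ⟩
    rw [Real.iSup_of_isEmpty]

end Aux12

/-- vector-valued pointwise bound for the far parts
`f_j^∞ = f_j · χ_{B(y,2r)^c}` on `B(y,r)`. -/
theorem vector_intrinsic_square_far_part_pointwise (n : ℕ) (γ : ℝ)
    (hγ0 : 0 < γ) (hγ1 : γ ≤ 1) :
    ∃ C : ℝ, 0 < C ∧ ∀ f : ℕ → En n → ℝ,
      (∀ j, LocallyIntegrable (f j) volume) →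
      ∀ (y : En n) (r : ℝ), 0 < r → ∀ x ∈ ball y r,
        Sl2 γ (fun j => (ball y (2 * r))ᶜ.indicator (f j)) x ≤
          ENNReal.ofReal C *
            ∑' l : ℕ, (volume (ball y ((2 : ℝ) ^ (l + 2) * r)))⁻¹ *
              ∫⁻ z in ball y ((2 : ℝ) ^ (l + 2) * r), l2 f z := by
  rcases Nat.eq_zero_or_pos n with hn | hn
  · -- the case `n = 0` : the far part vanishes identically
    subst hn
    refine ⟨1, one_pos, fun f hf y r hr x hx => ?_⟩
    haveI : Subsingleton (En 0) := ⟨fun a b => by ext i; exact i.elim0⟩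
    have hz : ∀ j z, (ball y (2 * r))ᶜ.indicator (f j) z = 0 := by
      intro j z
      have hzb : z ∈ ball y (2 * r) := by
        rw [mem_ball, Subsingleton.elim z y, dist_self]
        positivity
      exact Set.indicator_of_notMem (by simp [hzb]) _
    have hS : ∀ j : ℕ, Sgamma γ ((fun j => (ball y (2 * r))ᶜ.indicator (f j)) j) x = 0 :=
      fun j => Sgamma_eq_zero (fun u t => Agamma_le_zero_of_zero (hz j) u t)
    rw [Sl2]
    simp only [hS]
    rw [show (∑' (_ : ℕ), ((0:ℝ≥0∞)^(2:ℕ))) = 0 by simp,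
      ENNReal.zero_rpow_of_pos (by norm_num)]
    exact zero_le
  · -- the case `n ≥ 1`
    haveI hNT : Nontrivial (En n) := by
      refine nontrivial_of_ne (EuclideanSpace.single ⟨0, hn⟩ (1:ℝ)) 0 ?_
      intro h
      have h2 : (EuclideanSpace.single ⟨0, hn⟩ (1:ℝ) : En n) ⟨0, hn⟩ = (0 : En n) ⟨0, hn⟩ := by rw [h]
      rw [EuclideanSpace.single_apply] at h2
      simp at h2
    set Vn := volume (ball (0 : En n) 1) with hVn
    have hV0 : Vn ≠ 0 := (measure_ball_pos _ _ one_pos).ne'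
    have hVtop : Vn ≠ ∞ := measure_ball_lt_top.ne
    have hVr0 : Vn ^ (3/2:ℝ) ≠ 0 := by
      simp [ENNReal.rpow_eq_zero_iff, hV0, hVtop]
    have hVrtop : Vn ^ (3/2:ℝ) ≠ ∞ := ENNReal.rpow_ne_top_of_nonneg (by norm_num) hVtop
    refine ⟨2 * 8^n * (Vn ^ (3/2:ℝ)).toReal, ?_, fun f hf y r hr x hx => ?_⟩
    · have h1 : 0 < (Vn ^ (3/2:ℝ)).toReal := ENNReal.toReal_pos hVr0 hVrtop
      positivity
    set g : ℕ → En n → ℝ := fun j => (ball y (2 * r))ᶜ.indicator (f j) with hgdef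
    have hgabs : ∀ j z, |g j z| ≤ |f j z| := by
      intro j z
      simp only [hgdef]
      by_cases hzz : z ∈ (ball y (2 * r))ᶜ
      · rw [Set.indicator_of_mem hzz]
      · rw [Set.indicator_of_notMem hzz, abs_zero]; exact abs_nonneg _
    set I : ℕ → ℝ → ℝ≥0∞ := fun j s => ∫⁻ z in ball y s, ENNReal.ofReal |f j z| with hIdef
    have hImono : ∀ j, Monotone (I j) := by
      intro j s₁ s₂ h
      exact lintegral_mono_set (ball_subset_ball h)
    set m : ℕ → ℝ := fun l => 2^l * (r/2) with hmdef
    have hm0 : ∀ l, 0 < m l := fun l => by simp only [hmdef]; positivity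
    have hmsucc : ∀ l, m (l+1) = 2 * m l := fun l => by simp only [hmdef]; ring
    have hR8 : ∀ l, (2:ℝ)^(l+2) * r = 8 * m l := by
      intro l; simp only [hmdef]; rw [pow_succ, pow_succ]; ring
    set D : ℕ → ℝ≥0∞ := fun l => ENNReal.ofReal (4 * ((m l)^(2*n))⁻¹) * Vn with hDdef
    -- Step A : pointwise bound for each `j`
    have hstepA : ∀ j, Sgamma γ (g j) x ^ (2:ℕ) ≤
        ∑' l, D l * (I j ((2:ℝ)^(l+2) * r)) ^ (2:ℕ) := by
      intro j
      set κ : ℝ → ℝ≥0∞ := fun t =>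
        ENNReal.ofReal (2 * ((t^n)⁻¹)) ^ (2:ℕ) * ENNReal.ofReal ((t^(n+1))⁻¹) *
          (I j (4 * t)) ^ (2:ℕ) with hκdef
      set W : Set (En n × ℝ) := {q | dist x q.1 < q.2} ∩ {q | r/2 < q.2} with hWdef
      have hWmeas : MeasurableSet W :=
        ((isOpen_lt (continuous_const.dist continuous_fst) continuous_snd).inter
          (isOpen_lt continuous_const continuous_snd)).measurableSet
      have hκmeas : Measurable fun q : En n × ℝ => κ q.2 := by
        simp only [hκdef]
        refine Measurable.fun_mul (Measurable.fun_mul ?_ ?_) ?_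
        · exact (ENNReal.measurable_ofReal.comp
            (((measurable_snd.pow_const n).inv).const_mul 2)).pow_const 2
        · exact ENNReal.measurable_ofReal.comp (measurable_snd.pow_const (n+1)).inv
        · exact (((hImono j).measurable).comp (measurable_snd.const_mul 4)).pow_const 2
      have hpt : ∀ q : En n × ℝ,
          Set.indicator {q : En n × ℝ | dist x q.1 < q.2}
            (fun q => ENNReal.ofReal (Agamma γ (g j) q.1 q.2) ^ 2 /
              ENNReal.ofReal (q.2 ^ ((n:ℝ)+1))) q ≤ W.indicator (fun q => κ q.2) q := by
        intro q
        by_cases hq : q ∈ {q : En n × ℝ | dist x q.1 < q.2}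
        · rw [Set.indicator_of_mem hq]
          have hq1 : dist x q.1 < q.2 := hq
          have ht0 : 0 < q.2 := lt_of_le_of_lt dist_nonneg hq1
          by_cases ht : r/2 < q.2
          · have hqW : q ∈ W := ⟨hq1, ht⟩
            rw [Set.indicator_of_mem hqW]
            have hden : ENNReal.ofReal (q.2 ^ ((n:ℝ)+1)) = ENNReal.ofReal (q.2^(n+1)) := by
              rw [show ((n:ℝ)+1) = ((n+1:ℕ):ℝ) by push_cast; ring, Real.rpow_natCast]
            rw [hden, div_eq_mul_inv, ← ENNReal.ofReal_inv_of_pos (by positivity)]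
            have hsub : closedBall q.1 q.2 ⊆ ball y (4 * q.2) := by
              intro z hzz
              rw [mem_ball]
              have h1 : dist z q.1 ≤ q.2 := mem_closedBall.1 hzz
              have h2 : dist q.1 x < q.2 := by rw [dist_comm]; exact hq1
              have h3 : dist x y < r := mem_ball.1 hx
              calc dist z y ≤ dist z q.1 + dist q.1 x + dist x y := dist_triangle4 _ _ _ _
              _ < 4 * q.2 := by linarith
            have hAg := ofReal_Agamma_le hn hγ1 (hf j) (hgabs j) ht0 (u := q.1)
            have hJI : (∫⁻ z in closedBall q.1 q.2, ENNReal.ofReal |f j z|) ≤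
                I j (4 * q.2) := by
              simp only [hIdef]
              exact lintegral_mono_set hsub
            calc ENNReal.ofReal (Agamma γ (g j) q.1 q.2) ^ 2 *
                  ENNReal.ofReal ((q.2^(n+1))⁻¹)
                ≤ (ENNReal.ofReal (2 * ((q.2^n)⁻¹)) * I j (4 * q.2)) ^ 2 *
                    ENNReal.ofReal ((q.2^(n+1))⁻¹) := by
                  gcongr
                  exact hAg.trans (mul_le_mul' le_rfl hJI)
            _ = κ q.2 := by simp only [hκdef]; ring
          · push_neg at ht
            have h0 : ENNReal.ofReal (Agamma γ (g j) q.1 q.2) = 0 :=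
              ENNReal.ofReal_of_nonpos (Agamma_far_le_zero hx hq1 ht)
            rw [h0]
            simp
        · rw [Set.indicator_of_notMem hq]
          exact zero_le
      have hSsq : Sgamma γ (g j) x ^ (2:ℕ) =
          ∫⁻ q : En n × ℝ, Set.indicator {q : En n × ℝ | dist x q.1 < q.2}
            (fun q => ENNReal.ofReal (Agamma γ (g j) q.1 q.2) ^ 2 /
              ENNReal.ofReal (q.2 ^ ((n:ℝ)+1))) q := by
        rw [Sgamma, coneInt, sqrt_sq_e]
      rw [hSsq]
      have hG1 : (∫⁻ q : En n × ℝ, W.indicator (fun q => κ q.2) q) =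
          ∫⁻ t : ℝ, ∫⁻ u : En n, W.indicator (fun q : En n × ℝ => κ q.2) (u, t) := by
        rw [Measure.volume_eq_prod]
        exact lintegral_prod_symm _ (hκmeas.indicator hWmeas).aemeasurable
      have hinner : ∀ t : ℝ,
          (∫⁻ u : En n, W.indicator (fun q : En n × ℝ => κ q.2) (u, t)) =
          (Ioi (r/2)).indicator (fun t => κ t * volume (ball x t)) t := by
        intro t
        by_cases ht : r/2 < t
        · have heq : (fun u : En n => W.indicator (fun q : En n × ℝ => κ q.2) (u, t)) =
              (ball x t).indicator (fun _ => κ t) := by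
            funext u
            by_cases hu : dist x u < t
            · rw [Set.indicator_of_mem (show (u,t) ∈ W from ⟨hu, ht⟩),
                Set.indicator_of_mem (show u ∈ ball x t by rw [mem_ball, dist_comm]; exact hu)]
            · rw [Set.indicator_of_notMem (show (u,t) ∉ W from fun hc => hu hc.1),
                Set.indicator_of_notMem (show u ∉ ball x t by
                  simpa [mem_ball, dist_comm] using hu)]
          rw [heq, lintegral_indicator_const measurableSet_ball,
            Set.indicator_of_mem (show t ∈ Ioi (r/2) from ht)]
        · have heq : (fun u : En n => W.indicator (fun q : En n × ℝ => κ q.2) (u, t)) =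
              fun _ => 0 := by
            funext u
            exact Set.indicator_of_notMem (fun hc => ht hc.2) _
          rw [heq, lintegral_zero,
            Set.indicator_of_notMem (show t ∉ Ioi (r/2) by simpa using ht)]
      calc (∫⁻ q : En n × ℝ, Set.indicator {q : En n × ℝ | dist x q.1 < q.2}
            (fun q => ENNReal.ofReal (Agamma γ (g j) q.1 q.2) ^ 2 /
              ENNReal.ofReal (q.2 ^ ((n:ℝ)+1))) q)
          ≤ ∫⁻ q : En n × ℝ, W.indicator (fun q => κ q.2) q := lintegral_mono hpt
      _ = ∫⁻ t : ℝ, ∫⁻ u : En n, W.indicator (fun q : En n × ℝ => κ q.2) (u, t) := hG1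
      _ = ∫⁻ t : ℝ, (Ioi (r/2)).indicator (fun t => κ t * volume (ball x t)) t :=
            lintegral_congr hinner
      _ = ∫⁻ t in Ioi (r/2), κ t * volume (ball x t) := by
            rw [lintegral_indicator measurableSet_Ioi]
      _ ≤ ∑' l, ∫⁻ t in Ico (m l) (m (l+1)), κ t * volume (ball x t) := by
            refine le_trans (lintegral_mono_set ?_) (lintegral_iUnion_le _ _)
            intro t ht
            have ht' : r/2 < t := ht
            have hrp : (0:ℝ) < r/2 := by positivity
            have h2 : (1:ℝ) ≤ t / (r/2) := (one_le_div hrp).2 ht'.le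
            obtain ⟨l, h3, h4⟩ := exists_nat_pow_near h2 one_lt_two
            refine mem_iUnion.2 ⟨l, ?_, ?_⟩
            · have h5 := (le_div_iff₀ hrp).1 h3
              simpa [hmdef] using h5
            · have h5 := (div_lt_iff₀ hrp).1 h4
              simpa [hmdef] using h5
      _ ≤ ∑' l, D l * (I j ((2:ℝ)^(l+2) * r)) ^ (2:ℕ) := by
            refine ENNReal.tsum_le_tsum fun l => ?_
            have hml := hm0 l
            have hub : ∀ t ∈ Ico (m l) (m (l+1)), κ t * volume (ball x t) ≤
                ENNReal.ofReal (4 * ((m l)^(2*n+1))⁻¹) *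
                  (I j ((2:ℝ)^(l+2) * r)) ^ (2:ℕ) * Vn := by
              intro t ht
              obtain ⟨ht1, ht2⟩ := ht
              have ht0 : 0 < t := lt_of_lt_of_le hml ht1
              have hvol : volume (ball x t) = ENNReal.ofReal (t ^ n) * Vn := by
                rw [hVn, Measure.addHaar_ball volume x ht0.le, finrank_euclideanSpace_fin]
              have hI4 : I j (4 * t) ≤ I j ((2:ℝ)^(l+2) * r) := by
                apply hImono
                rw [hR8 l]
                rw [hmsucc l] at ht2
                linarith
              have hcoef : ENNReal.ofReal (2 * ((t^n)⁻¹)) ^ (2:ℕ) *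
                  ENNReal.ofReal ((t^(n+1))⁻¹) * ENNReal.ofReal (t ^ n) =
                  ENNReal.ofReal ((2 * ((t^n)⁻¹))^2 * (t^(n+1))⁻¹ * t^n) := by
                rw [← ENNReal.ofReal_pow (show (0:ℝ) ≤ 2 * ((t^n)⁻¹) by positivity) 2,
                  ← ENNReal.ofReal_mul (by positivity), ← ENNReal.ofReal_mul (by positivity)]
              have hcval : (2 * ((t^n)⁻¹))^2 * (t^(n+1))⁻¹ * t^n =
                  4 * ((t^(2*n+1))⁻¹) := by
                field_simp
                ring
              have hcmono : (4:ℝ) * ((t^(2*n+1))⁻¹) ≤ 4 * (((m l)^(2*n+1))⁻¹) := by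
                have h9 : ((m l)^(2*n+1)) ≤ t^(2*n+1) :=
                  pow_le_pow_left₀ hml.le ht1 _
                have h10 : (t^(2*n+1))⁻¹ ≤ ((m l)^(2*n+1))⁻¹ := by
                  apply inv_anti₀ (by positivity) h9
                linarith
              calc κ t * volume (ball x t) =
                  (ENNReal.ofReal (2 * ((t^n)⁻¹)) ^ (2:ℕ) * ENNReal.ofReal ((t^(n+1))⁻¹) *
                    ENNReal.ofReal (t ^ n)) * ((I j (4*t)) ^ (2:ℕ) * Vn) := by
                    simp only [hκdef]
                    rw [hvol]
                    ring
              _ = ENNReal.ofReal (4 * ((t^(2*n+1))⁻¹)) * ((I j (4*t)) ^ (2:ℕ) * Vn) := by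
                    rw [hcoef, hcval]
              _ ≤ ENNReal.ofReal (4 * (((m l)^(2*n+1))⁻¹)) *
                    ((I j ((2:ℝ)^(l+2)*r)) ^ (2:ℕ) * Vn) := by
                    refine mul_le_mul' (ENNReal.ofReal_le_ofReal hcmono) ?_
                    exact mul_le_mul' (pow_le_pow_left₀ (zero_le) hI4 2) le_rfl
              _ = ENNReal.ofReal (4 * (((m l)^(2*n+1))⁻¹)) *
                    (I j ((2:ℝ)^(l+2) * r)) ^ (2:ℕ) * Vn := by
                    ring
            calc ∫⁻ t in Ico (m l) (m (l+1)), κ t * volume (ball x t)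
                ≤ ∫⁻ _ in Ico (m l) (m (l+1)),
                    (ENNReal.ofReal (4 * (((m l)^(2*n+1))⁻¹)) *
                      (I j ((2:ℝ)^(l+2) * r)) ^ (2:ℕ) * Vn) :=
                  setLIntegral_mono measurable_const hub
            _ = (ENNReal.ofReal (4 * (((m l)^(2*n+1))⁻¹)) *
                    (I j ((2:ℝ)^(l+2) * r)) ^ (2:ℕ) * Vn) *
                  volume (Ico (m l) (m (l+1))) := setLIntegral_const _ _
            _ = D l * (I j ((2:ℝ)^(l+2) * r)) ^ (2:ℕ) := by
                  rw [Real.volume_Ico, hmsucc l, show (2 * m l - m l) = m l by ring]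
                  have hc2 : ENNReal.ofReal (4 * (((m l)^(2*n+1))⁻¹)) *
                      ENNReal.ofReal (m l) = ENNReal.ofReal (4 * (((m l)^(2*n))⁻¹)) := by
                    rw [← ENNReal.ofReal_mul (by positivity)]
                    congr 1
                    field_simp
                    ring
                  calc (ENNReal.ofReal (4 * (((m l)^(2*n+1))⁻¹)) *
                        (I j ((2:ℝ)^(l+2) * r)) ^ (2:ℕ) * Vn) * ENNReal.ofReal (m l)
                      = (ENNReal.ofReal (4 * (((m l)^(2*n+1))⁻¹)) * ENNReal.ofReal (m l)) *
                        ((I j ((2:ℝ)^(l+2) * r)) ^ (2:ℕ) * Vn) := by ring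
                  _ = ENNReal.ofReal (4 * (((m l)^(2*n))⁻¹)) *
                        ((I j ((2:ℝ)^(l+2) * r)) ^ (2:ℕ) * Vn) := by rw [hc2]
                  _ = D l * (I j ((2:ℝ)^(l+2) * r)) ^ (2:ℕ) := by
                        simp only [hDdef]
                        ring
    -- Step B : vector-valued Minkowski inequality
    have hfinB : ∀ (l : ℕ) (j : ℕ),
        (∫⁻ z in ball y ((2:ℝ)^(l+2) * r), ENNReal.ofReal |f j z|) ≠ ∞ := by
      intro l j
      have h1 : IntegrableOn (f j) (closedBall y ((2:ℝ)^(l+2) * r)) volume :=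
        (hf j).integrableOn_isCompact (isCompact_closedBall _ _)
      have h2 : IntegrableOn (f j) (ball y ((2:ℝ)^(l+2) * r)) volume :=
        h1.mono_set ball_subset_closedBall
      have h3 := h2.hasFiniteIntegral
      rw [HasFiniteIntegral] at h3
      have h4 : (∫⁻ z in ball y ((2:ℝ)^(l+2)*r), ENNReal.ofReal |f j z|) =
          ∫⁻ z in ball y ((2:ℝ)^(l+2)*r), (‖f j z‖₊ : ℝ≥0∞) := by
        congr 1
        funext z
        exact (Real.enorm_eq_ofReal_abs (f j z)).symm
      rw [h4]
      exact h3.ne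
    have hstepB : ∀ l, (∑' j, (I j ((2:ℝ)^(l+2) * r)) ^ (2:ℕ)) ≤
        (∫⁻ z in ball y ((2:ℝ)^(l+2) * r), l2 f z) ^ (2:ℕ) := by
      intro l
      exact mink f _ (fun j => (hf j).aestronglyMeasurable.aemeasurable.restrict)
        (fun j => hfinB l j)
    -- final assembly
    have hDhalf : ∀ l, (D l) ^ (1/2:ℝ) ≤
        ENNReal.ofReal (2 * 8^n * (Vn ^ (3/2:ℝ)).toReal) *
          (volume (ball y ((2:ℝ)^(l+2) * r)))⁻¹ := by
      intro l
      have hml := hm0 l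
      have hrad : (0:ℝ) < (2:ℝ)^(l+2) * r := by positivity
      have hBl0 : volume (ball y ((2:ℝ)^(l+2) * r)) ≠ 0 :=
        (measure_ball_pos _ _ hrad).ne'
      have hBlt : volume (ball y ((2:ℝ)^(l+2) * r)) ≠ ∞ := measure_ball_lt_top.ne
      have hvolB : volume (ball y ((2:ℝ)^(l+2) * r)) =
          ENNReal.ofReal (((2:ℝ)^(l+2) * r) ^ n) * Vn := by
        rw [hVn, Measure.addHaar_ball volume y hrad.le, finrank_euclideanSpace_fin]
      have hDl : (D l) ^ (1/2:ℝ) = ENNReal.ofReal (2 * ((m l)^n)⁻¹) * Vn ^ (1/2:ℝ) := by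
        simp only [hDdef]
        rw [ENNReal.mul_rpow_of_nonneg _ _ (by norm_num)]
        congr 1
        rw [show (4:ℝ) * ((m l)^(2*n))⁻¹ = (2 * ((m l)^n)⁻¹)^2 by field_simp; ring,
          ENNReal.ofReal_pow (by positivity)]
        exact sq_sqrt_e _
      have h5 : ENNReal.ofReal (2 * ((m l)^n)⁻¹) *
          ENNReal.ofReal (((2:ℝ)^(l+2) * r)^n) = ENNReal.ofReal (2 * 8^n) := by
        rw [← ENNReal.ofReal_mul (by positivity)]
        congr 1
        rw [hR8 l, mul_pow, show (8:ℝ)^n = 2^n * 4^n by rw [← mul_pow]; norm_num]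
        field_simp
        simp only [hmdef, mul_pow]
        rw [show (8:ℝ)^n = 2^n * 4^n by rw [← mul_pow]; norm_num]
        ring
      have h6 : Vn ^ (1/2:ℝ) * Vn = Vn ^ (3/2:ℝ) := by
        have h7 : Vn ^ (1/2:ℝ) * Vn ^ (1:ℝ) = Vn ^ ((1/2:ℝ)+1) :=
          (ENNReal.rpow_add _ _ hV0 hVtop).symm
        rw [ENNReal.rpow_one] at h7
        rw [h7]
        norm_num
      have hmul : (D l) ^ (1/2:ℝ) * volume (ball y ((2:ℝ)^(l+2) * r)) =
          ENNReal.ofReal (2 * 8^n * (Vn ^ (3/2:ℝ)).toReal) := by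
        rw [hDl, hvolB]
        calc (ENNReal.ofReal (2 * ((m l)^n)⁻¹) * Vn ^ (1/2:ℝ)) *
              (ENNReal.ofReal (((2:ℝ)^(l+2) * r)^n) * Vn)
            = (ENNReal.ofReal (2 * ((m l)^n)⁻¹) *
                ENNReal.ofReal (((2:ℝ)^(l+2) * r)^n)) * (Vn ^ (1/2:ℝ) * Vn) := by ring
        _ = ENNReal.ofReal (2 * 8^n) * Vn ^ (3/2:ℝ) := by rw [h5, h6]
        _ = ENNReal.ofReal (2 * 8^n * (Vn ^ (3/2:ℝ)).toReal) := by
              conv_rhs => rw [ENNReal.ofReal_mul (by positivity)]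
              rw [ENNReal.ofReal_toReal hVrtop]
      refine le_of_eq ?_
      calc (D l) ^ (1/2:ℝ)
          = (D l) ^ (1/2:ℝ) * volume (ball y ((2:ℝ)^(l+2) * r)) *
            (volume (ball y ((2:ℝ)^(l+2) * r)))⁻¹ := by
            rw [mul_assoc, ENNReal.mul_inv_cancel hBl0 hBlt, mul_one]
      _ = ENNReal.ofReal (2 * 8^n * (Vn ^ (3/2:ℝ)).toReal) *
            (volume (ball y ((2:ℝ)^(l+2) * r)))⁻¹ := by rw [hmul]
    rw [Sl2]
    calc (∑' j, Sgamma γ (g j) x ^ 2) ^ (1/2:ℝ)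
        ≤ (∑' j, ∑' l, D l * (I j ((2:ℝ)^(l+2) * r)) ^ (2:ℕ)) ^ (1/2:ℝ) :=
          ENNReal.rpow_le_rpow (ENNReal.tsum_le_tsum hstepA) (by norm_num)
    _ = (∑' l, D l * ∑' j, (I j ((2:ℝ)^(l+2) * r)) ^ (2:ℕ)) ^ (1/2:ℝ) := by
          rw [ENNReal.tsum_comm]
          congr 1
          exact tsum_congr fun l => ENNReal.tsum_mul_left
    _ ≤ (∑' l, D l * (∫⁻ z in ball y ((2:ℝ)^(l+2) * r), l2 f z) ^ (2:ℕ)) ^ (1/2:ℝ) := by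
          refine ENNReal.rpow_le_rpow ?_ (by norm_num)
          exact ENNReal.tsum_le_tsum fun l => mul_le_mul' le_rfl (hstepB l)
    _ ≤ ∑' l, (D l * (∫⁻ z in ball y ((2:ℝ)^(l+2) * r), l2 f z) ^ (2:ℕ)) ^ (1/2:ℝ) :=
          tsum_sqrt_le _
    _ = ∑' l, (D l) ^ (1/2:ℝ) * (∫⁻ z in ball y ((2:ℝ)^(l+2) * r), l2 f z) := by
          refine tsum_congr fun l => ?_
          rw [ENNReal.mul_rpow_of_nonneg _ _ (by norm_num), sq_sqrt_e]
    _ ≤ ∑' l, (ENNReal.ofReal (2 * 8^n * (Vn ^ (3/2:ℝ)).toReal) *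
          (volume (ball y ((2:ℝ)^(l+2) * r)))⁻¹) *
          (∫⁻ z in ball y ((2:ℝ)^(l+2) * r), l2 f z) :=
          ENNReal.tsum_le_tsum fun l => mul_le_mul' (hDhalf l) le_rfl
    _ = ENNReal.ofReal (2 * 8^n * (Vn ^ (3/2:ℝ)).toReal) *
          ∑' l, (volume (ball y ((2:ℝ)^(l+2) * r)))⁻¹ *
            (∫⁻ z in ball y ((2:ℝ)^(l+2) * r), l2 f z) := by
          rw [← ENNReal.tsum_mul_left]
          exact tsum_congr fun l => by ring

end
end

section
/- Let 0<γ≤1 and let h ∈ L¹(ℝⁿ) be supported in a cube Q centered at c with side length ℓ(Q) and satisfy ∫_{ℝⁿ} h = 0. Then for every φ ∈ C_γ, every t>0 and every point u ∈ ℝⁿ, |φ_t * h(u)| ≤ C · (ℓ(Q)^γ / t^{n+γ}) ∫_{Q ∩ {z : |z−u| ≤ t}} |h(z)| dz, with C depending only on n and γ. -/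
open MeasureTheory Metric Set
open scoped ENNReal NNReal Real

noncomputable section

lemma rpow_le_add_one' {a γ : ℝ} (ha : 0 ≤ a) (hγ0 : 0 < γ) (hγ1 : γ ≤ 1) :
    a ^ γ ≤ a + 1 := by
  rcases le_total a 1 with h | h
  · calc a ^ γ ≤ 1 ^ γ := Real.rpow_le_rpow ha h hγ0.le
      _ = 1 := Real.one_rpow γ
      _ ≤ a + 1 := by linarith
  · calc a ^ γ ≤ a ^ (1:ℝ) := Real.rpow_le_rpow_of_exponent_le h hγ1
      _ = a := Real.rpow_one a
      _ ≤ a + 1 := by linarith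

lemma mul_rpow_le' {γ a s : ℝ} (hγ0 : 0 < γ) (hγ1 : γ ≤ 1) (ha : 0 ≤ a) (hs : 0 ≤ s) :
    (a * s) ^ γ ≤ (a + 1) * s ^ γ := by
  rw [Real.mul_rpow ha hs]
  exact mul_le_mul_of_nonneg_right (rpow_le_add_one' ha hγ0 hγ1) (Real.rpow_nonneg hs γ)

lemma phi_near_boundary' {n : ℕ} (hn : 0 < n) {γ : ℝ} (hγ0 : 0 < γ)
    {φ : En n → ℝ} (hφ0 : ∀ v : En n, 1 < ‖v‖ → φ v = 0)
    (hφh : ∀ x x' : En n, |φ x - φ x'| ≤ ‖x - x'‖ ^ γ)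
    {v : En n} {r : ℝ} (hr : 0 < r) (hv1 : ‖v‖ ≤ 1) (hv2 : 1 - r < ‖v‖) :
    |φ v| ≤ (2 * r) ^ γ := by
  by_cases hv : v = 0
  · subst hv
    simp only [norm_zero] at hv2
    have hr1 : 1 < r := by linarith
    set w : En n := EuclideanSpace.single (⟨0, hn⟩ : Fin n) (1 + r) with hw
    have hwn : ‖w‖ = 1 + r := by
      rw [hw, EuclideanSpace.norm_single]; rw [Real.norm_eq_abs, abs_of_pos]; linarith
    have hφw : φ w = 0 := hφ0 w (by rw [hwn]; linarith)
    calc |φ 0| = |φ 0 - φ w| := by rw [hφw, sub_zero]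
      _ ≤ ‖(0 : En n) - w‖ ^ γ := hφh 0 w
      _ = (1 + r) ^ γ := by rw [zero_sub, norm_neg, hwn]
      _ ≤ (2 * r) ^ γ := Real.rpow_le_rpow (by linarith) (by linarith) hγ0.le
  · have hvn : 0 < ‖v‖ := norm_pos_iff.mpr hv
    set w : En n := ((1 + r) / ‖v‖) • v with hw
    have hwn : ‖w‖ = 1 + r := by
      rw [hw, norm_smul, Real.norm_eq_abs, abs_of_pos (by positivity)]
      field_simp
    have hφw : φ w = 0 := hφ0 w (by rw [hwn]; linarith)
    have hvw : ‖v - w‖ = 1 + r - ‖v‖ := by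
      have h4 : v - w = (1 - (1 + r) / ‖v‖) • v := by rw [hw]; module
      rw [h4, norm_smul, Real.norm_eq_abs]
      have h1 : (1 + r) / ‖v‖ ≥ 1 + r := by
        rw [ge_iff_le, le_div_iff₀ hvn]
        nlinarith
      rw [abs_of_nonpos (by nlinarith)]
      field_simp
      ring
    calc |φ v| = |φ v - φ w| := by rw [hφw, sub_zero]
      _ ≤ ‖v - w‖ ^ γ := hφh v w
      _ ≤ (2 * r) ^ γ := by
          apply Real.rpow_le_rpow (by rw [hvw]; linarith) _ hγ0.le
          rw [hvw]; linarith

lemma phi_continuous' {n : ℕ} {γ : ℝ} (hγ0 : 0 < γ) {φ : En n → ℝ}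
    (hφh : ∀ x x' : En n, |φ x - φ x'| ≤ ‖x - x'‖ ^ γ) : Continuous φ := by
  rw [continuous_iff_continuousAt]
  intro x
  have h0 : Filter.Tendsto (fun x' : En n => ‖x' - x‖) (nhds x) (nhds 0) := by
    have := ((continuous_id.sub (continuous_const (y := x))).norm).tendsto x
    simpa using this
  have h1 : Filter.Tendsto (fun x' : En n => ‖x' - x‖ ^ γ) (nhds x) (nhds 0) := by
    have h2 := (Real.continuousAt_rpow_const 0 γ (Or.inr hγ0.le)).tendsto
    have := h2.comp h0
    simpa [Function.comp_def, Real.zero_rpow (ne_of_gt hγ0)] using this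
  have h3 : Filter.Tendsto (fun x' => φ x' - φ x) (nhds x) (nhds 0) :=
    squeeze_zero_norm (fun x' => by simpa [Real.norm_eq_abs] using hφh x' x) h1
  have := h3.add_const (φ x)
  simpa [ContinuousAt] using this

lemma cube_measurable' {n : ℕ} (c : En n) (L : ℝ) : MeasurableSet (cube c L) := by
  have : cube c L = ⋂ i, {x : En n | |x i - c i| ≤ L / 2} := by
    ext x; simp [cube, Set.mem_iInter]
  rw [this]
  exact MeasurableSet.iInter fun i => measurableSet_le (by fun_prop) measurable_const

lemma norm_sub_le_of_mem_cube' {n : ℕ} {c z : En n} {L : ℝ} (hL : 0 ≤ L)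
    (hz : z ∈ cube c L) : ‖z - c‖ ≤ Real.sqrt n * (L / 2) := by
  rw [EuclideanSpace.norm_eq]
  have h1 : ∑ i, ‖(z - c) i‖ ^ 2 ≤ ∑ _i : Fin n, (L / 2) ^ 2 := by
    apply Finset.sum_le_sum
    intro i _
    have h3 := hz i
    have h2 : ‖(z - c) i‖ = |z i - c i| := by simp [Real.norm_eq_abs]
    rw [h2]
    nlinarith [abs_nonneg (z i - c i)]
  calc Real.sqrt (∑ i, ‖(z - c) i‖ ^ 2) ≤ Real.sqrt (∑ _i : Fin n, (L/2)^2) :=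
        Real.sqrt_le_sqrt h1
    _ = Real.sqrt (n * (L/2)^2) := by rw [Finset.sum_const]; simp [mul_comm]
    _ = Real.sqrt n * (L/2) := by
        rw [Real.sqrt_mul (by positivity), Real.sqrt_sq (by positivity)]


/-- kernel estimate for `φ_t * h` with `h` supported in a cube
`Q` and of mean zero. -/
theorem convolution_cancellation_estimate (n : ℕ) (γ : ℝ)
    (hγ0 : 0 < γ) (hγ1 : γ ≤ 1) :
    ∃ C : ℝ, 0 < C ∧ ∀ (h : En n → ℝ) (c : En n) (L : ℝ), 0 < L →
      Integrable h volume → Function.support h ⊆ cube c L → (∫ z, h z) = 0 →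
      ∀ φ ∈ Cfam n γ, ∀ t : ℝ, 0 < t → ∀ u : En n,
        |∫ z, dil φ t (u - z) * h z| ≤
          C * (L ^ γ / t ^ ((n : ℝ) + γ)) *
            ∫ z in cube c L ∩ closedBall u t, |h z| := by
  refine ⟨2 * Real.sqrt n + 2, by positivity, ?_⟩
  intro h c L hL hInt hsupp hmean φ hφ t ht u
  obtain ⟨hφsupp, hφmean, hφhold⟩ := hφ
  have habs_nonneg : 0 ≤ ∫ z in cube c L ∩ closedBall u t, |h z| :=
    integral_nonneg fun z => abs_nonneg _
  rcases Nat.eq_zero_or_pos n with hn | hn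
  · -- n = 0 : En 0 is a subsingleton
    subst hn
    have hsub : ∀ z : En 0, z = u := fun z => Subsingleton.elim z u
    have heq : (fun z : En 0 => dil φ t (u - z) * h z)
        = fun z : En 0 => dil φ t (u - u) * h z := by
      funext z; rw [hsub z]
    rw [heq, integral_const_mul, hmean, mul_zero, abs_zero]
    positivity
  -- main case n ≥ 1
  have hφ0 : ∀ v : En n, 1 < ‖v‖ → φ v = 0 := by
    intro v hv
    by_contra hne
    exact absurd (mem_closedBall_zero_iff.mp (hφsupp (Function.mem_support.mpr hne)))
      (not_le.mpr hv)
  have hsn : 0 < Real.sqrt n := Real.sqrt_pos.mpr (by exact_mod_cast hn)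
  set C := 2 * Real.sqrt n + 2 with hCdef
  have hCpos : (0:ℝ) < C := by positivity
  set S := cube c L ∩ closedBall u t with hSdef
  have hS : MeasurableSet S := (cube_measurable' c L).inter measurableSet_closedBall
  set D := C * (L ^ γ / t ^ ((n : ℝ) + γ)) with hDdef
  have htn : (0:ℝ) < t ^ (-(n:ℝ)) := Real.rpow_pos_of_pos ht _
  have htnn : (0:ℝ) < t ^ (n:ℝ) := Real.rpow_pos_of_pos ht _
  have htγ : (0:ℝ) < t ^ γ := Real.rpow_pos_of_pos ht _
  have hD : D = C * (t ^ (-(n:ℝ)) * (L / t) ^ γ) := by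
    rw [hDdef, Real.rpow_add ht, Real.rpow_neg ht.le, Real.div_rpow hL.le ht.le]
    field_simp
  have hDpos : 0 ≤ D := by
    rw [hD]; positivity
  have hcubeD : ∀ z ∈ cube c L, ‖z - c‖ ≤ Real.sqrt n * (L/2) :=
    fun z hz => norm_sub_le_of_mem_cube' hL.le hz
  have hIndInt : Integrable (S.indicator fun z => D * |h z|) volume :=
    (hInt.abs.const_mul D).indicator hS
  have hIndVal : ∫ z, S.indicator (fun z => D * |h z|) z = D * ∫ z in S, |h z| := by
    rw [integral_indicator hS, integral_const_mul]
  have hIndNonneg : ∀ z, 0 ≤ S.indicator (fun z => D * |h z|) z :=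
    fun z => Set.indicator_nonneg (fun z _ => mul_nonneg hDpos (abs_nonneg _)) z
  -- φ is bounded by 3 ^ γ
  have hφb : ∀ v : En n, |φ v| ≤ 3 ^ γ := by
    intro v
    rcases le_or_gt ‖v‖ 1 with hle | hlt
    · have h32 : (0:ℝ) < 3/2 := by norm_num
      have := phi_near_boundary' hn hγ0 hφ0 hφhold h32 hle
        (by linarith [norm_nonneg v])
      have h3 : (2 * (3/2 : ℝ)) = 3 := by norm_num
      rwa [h3] at this
    · rw [hφ0 v hlt, abs_zero]; positivity
  have hdil_cont : Continuous fun z : En n => dil φ t (u - z) := by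
    unfold dil
    exact continuous_const.mul ((phi_continuous' hγ0 hφhold).comp
      ((continuous_const.sub continuous_id).const_smul t⁻¹))
  have hdil_bd : ∀ y : En n, |dil φ t y| ≤ t ^ (-(n:ℝ)) * 3 ^ γ := by
    intro y
    unfold dil
    rw [abs_mul, abs_of_pos htn]
    exact mul_le_mul_of_nonneg_left (hφb _) htn.le
  have hmain_int : Integrable (fun z => dil φ t (u - z) * h z) volume := by
    apply hInt.bdd_mul (c := t ^ (-(n:ℝ)) * 3 ^ γ) hdil_cont.aestronglyMeasurable
    exact Filter.Eventually.of_forall fun z => by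
      rw [Real.norm_eq_abs]; exact hdil_bd _
  -- key inequality through the indicator bound
  have hkey : ∀ F : En n → ℝ,
      (∫ z, dil φ t (u - z) * h z) = (∫ z, F z * h z) →
      (∀ z, ‖F z * h z‖ ≤ S.indicator (fun z => D * |h z|) z) →
      |∫ z, dil φ t (u - z) * h z| ≤ C * (L ^ γ / t ^ ((n : ℝ) + γ)) * ∫ z in S, |h z| := by
    intro F hFeq hFle
    rw [hFeq, ← Real.norm_eq_abs]
    calc ‖∫ z, F z * h z‖ ≤ ∫ z, S.indicator (fun z => D * |h z|) z :=
          norm_integral_le_of_norm_le hIndInt (Filter.Eventually.of_forall hFle)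
      _ = D * ∫ z in S, |h z| := hIndVal
  by_cases hcase : ‖u - c‖ + Real.sqrt n * (L/2) ≤ t
  · -- Case A : the cube is inside the ball; use cancellation
    apply hkey (fun z => dil φ t (u - z) - dil φ t (u - c))
    · have hconst_int : Integrable (fun z => dil φ t (u - c) * h z) volume :=
        hInt.const_mul _
      simp only [sub_mul]
      rw [integral_sub hmain_int hconst_int, integral_const_mul, hmean, mul_zero, sub_zero]
    · intro z
      rw [Real.norm_eq_abs]
      by_cases hz : h z = 0
      · rw [hz, mul_zero, abs_zero]; exact hIndNonneg z
      · have hzQ : z ∈ cube c L := hsupp (Function.mem_support.mpr hz)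
        have hzc := hcubeD z hzQ
        have hzB : z ∈ closedBall u t := by
          rw [mem_closedBall]
          calc dist z u ≤ dist z c + dist c u := dist_triangle z c u
            _ = ‖z - c‖ + ‖u - c‖ := by rw [dist_eq_norm, dist_eq_norm, norm_sub_rev c u]
            _ ≤ t := by linarith
        rw [Set.indicator_of_mem (Set.mem_inter hzQ hzB), abs_mul]
        apply mul_le_mul_of_nonneg_right _ (abs_nonneg _)
        have h1 : dil φ t (u - z) - dil φ t (u - c)
            = t ^ (-(n:ℝ)) * (φ (t⁻¹ • (u - z)) - φ (t⁻¹ • (u - c))) := by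
          unfold dil; ring
        rw [h1, abs_mul, abs_of_pos htn]
        have h3 : ‖t⁻¹ • (u - z) - t⁻¹ • (u - c)‖ = ‖z - c‖ / t := by
          rw [← smul_sub, norm_smul, Real.norm_eq_abs, abs_of_pos (inv_pos.mpr ht)]
          have h4 : u - z - (u - c) = c - z := by module
          rw [h4, norm_sub_rev, inv_mul_eq_div]
        have h5 : ‖z - c‖ / t ≤ Real.sqrt n / 2 * (L / t) := by
          rw [div_le_iff₀ ht] at *
          calc ‖z - c‖ ≤ Real.sqrt n * (L/2) := hzc
            _ = Real.sqrt n / 2 * (L / t) * t := by field_simp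
        calc t ^ (-(n:ℝ)) * |φ (t⁻¹ • (u - z)) - φ (t⁻¹ • (u - c))|
            ≤ t ^ (-(n:ℝ)) * ((Real.sqrt n / 2 * (L / t)) ^ γ) := by
              apply mul_le_mul_of_nonneg_left _ htn.le
              calc |φ (t⁻¹ • (u - z)) - φ (t⁻¹ • (u - c))|
                  ≤ ‖t⁻¹ • (u - z) - t⁻¹ • (u - c)‖ ^ γ := hφhold _ _
                _ = (‖z - c‖ / t) ^ γ := by rw [h3]
                _ ≤ (Real.sqrt n / 2 * (L / t)) ^ γ :=
                    Real.rpow_le_rpow (by positivity) h5 hγ0.le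
          _ ≤ t ^ (-(n:ℝ)) * ((Real.sqrt n / 2 + 1) * (L / t) ^ γ) := by
              apply mul_le_mul_of_nonneg_left _ htn.le
              exact mul_rpow_le' hγ0 hγ1 (by positivity) (by positivity)
          _ ≤ D := by
              rw [hD, hCdef]
              have hab : (0:ℝ) ≤ t ^ (-(n:ℝ)) * (L/t)^γ := by positivity
              calc t ^ (-(n:ℝ)) * ((Real.sqrt n / 2 + 1) * (L / t) ^ γ)
                  = (Real.sqrt n / 2 + 1) * (t ^ (-(n:ℝ)) * (L/t)^γ) := by ring
                _ ≤ (2 * Real.sqrt n + 2) * (t ^ (-(n:ℝ)) * (L/t)^γ) :=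
                    mul_le_mul_of_nonneg_right (by linarith) hab
  · -- Case B : part of the cube is far; direct size estimate
    push_neg at hcase
    apply hkey (fun z => dil φ t (u - z)) rfl
    intro z
    rw [Real.norm_eq_abs]
    by_cases hz : h z = 0
    · rw [hz, mul_zero, abs_zero]; exact hIndNonneg z
    have hzQ : z ∈ cube c L := hsupp (Function.mem_support.mpr hz)
    have hzc := hcubeD z hzQ
    by_cases hzB : ‖u - z‖ ≤ t
    · have hzB' : z ∈ closedBall u t := by
        rw [mem_closedBall, dist_eq_norm, norm_sub_rev]; exact hzB
      rw [Set.indicator_of_mem (Set.mem_inter hzQ hzB'), abs_mul]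
      apply mul_le_mul_of_nonneg_right _ (abs_nonneg _)
      unfold dil
      rw [abs_mul, abs_of_pos htn]
      -- estimate |φ (t⁻¹ • (u - z))|
      have hr : (0:ℝ) < Real.sqrt n * L / t := by positivity
      have hv1 : ‖t⁻¹ • (u - z)‖ ≤ 1 := by
        rw [norm_smul, Real.norm_eq_abs, abs_of_pos (inv_pos.mpr ht)]
        rw [inv_mul_eq_div, div_le_one ht]
        exact hzB
      have hv2 : 1 - Real.sqrt n * L / t < ‖t⁻¹ • (u - z)‖ := by
        rw [norm_smul, Real.norm_eq_abs, abs_of_pos (inv_pos.mpr ht), inv_mul_eq_div]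
        have h6 : ‖u - c‖ ≤ ‖u - z‖ + ‖z - c‖ := by
          calc ‖u - c‖ = ‖(u - z) + (z - c)‖ := by congr 1; module
            _ ≤ ‖u - z‖ + ‖z - c‖ := norm_add_le _ _
        rw [sub_lt_iff_lt_add, ← add_div, lt_div_iff₀ ht, one_mul]
        nlinarith
      have hφv := phi_near_boundary' hn hγ0 hφ0 hφhold hr hv1 hv2
      calc t ^ (-(n:ℝ)) * |φ (t⁻¹ • (u - z))|
          ≤ t ^ (-(n:ℝ)) * ((2 * (Real.sqrt n * L / t)) ^ γ) :=
            mul_le_mul_of_nonneg_left hφv htn.le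
        _ = t ^ (-(n:ℝ)) * ((2 * Real.sqrt n * (L / t)) ^ γ) := by
            congr 2; ring
        _ ≤ t ^ (-(n:ℝ)) * ((2 * Real.sqrt n + 1) * (L / t) ^ γ) := by
            apply mul_le_mul_of_nonneg_left _ htn.le
            exact mul_rpow_le' hγ0 hγ1 (by positivity) (by positivity)
        _ ≤ D := by
            rw [hD, hCdef]
            have hab : (0:ℝ) ≤ t ^ (-(n:ℝ)) * (L/t)^γ := by positivity
            calc t ^ (-(n:ℝ)) * ((2 * Real.sqrt n + 1) * (L / t) ^ γ)
                = (2 * Real.sqrt n + 1) * (t ^ (-(n:ℝ)) * (L/t)^γ) := by ring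
              _ ≤ (2 * Real.sqrt n + 2) * (t ^ (-(n:ℝ)) * (L/t)^γ) :=
                  mul_le_mul_of_nonneg_right (by linarith) hab
    · -- z outside the ball : dil vanishes
      have : φ (t⁻¹ • (u - z)) = 0 := by
        apply hφ0
        rw [norm_smul, Real.norm_eq_abs, abs_of_pos (inv_pos.mpr ht), inv_mul_eq_div,
          lt_div_iff₀ ht, one_mul]
        exact lt_of_not_ge hzB
      unfold dil
      rw [this, mul_zero, zero_mul, abs_zero]
      exact hIndNonneg z


end
end
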